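/- arXiv:1509.03515 — 5 statements merged into one kernel-verified Lean document; each statement's English description precedes it below -/
import Mathlib

section
/- The map (a,b,c,d) ↦ (bc/(ab+ac), b, c, d(b+c)) on quadruples of positive reals, viewed in logarithmic coordinates (log a, log b, log c, log d) ↦ (log(bc/(ab+ac)), log b, log c, log(d(b+c))), has Jacobian determinant equal to ±1. -/
/-- The gRSK local move `(a,b,c,d) ↦ (bc/(ab+ac), b, c, d(b+c))` viewed in
logarithmic coordinates. -/
noncomputable def localMoveLog (x : Fin 4 → ℝ) : Fin 4 → ℝ :=
  ![Real.log (Real.exp (x 1) * Real.exp (x 2) /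
      (Real.exp (x 0) * Real.exp (x 1) + Real.exp (x 0) * Real.exp (x 2))),
    Real.log (Real.exp (x 1)),
    Real.log (Real.exp (x 2)),
    Real.log (Real.exp (x 3) * (Real.exp (x 1) + Real.exp (x 2)))]

/-- A smooth reformulation of `localMoveLog`. -/
noncomputable def Fmap (x : Fin 4 → ℝ) : Fin 4 → ℝ :=
  ![x 1 + x 2 - x 0 - Real.log (Real.exp (x 1) + Real.exp (x 2)),
    x 1, x 2, x 3 + Real.log (Real.exp (x 1) + Real.exp (x 2))]

lemma localMoveLog_eq_Fmap : localMoveLog = Fmap := by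
  funext x i
  have key : Real.exp (x 0) * Real.exp (x 1) + Real.exp (x 0) * Real.exp (x 2)
      = Real.exp (x 0) * (Real.exp (x 1) + Real.exp (x 2)) := by ring
  fin_cases i
  · show Real.log (Real.exp (x 1) * Real.exp (x 2) /
        (Real.exp (x 0) * Real.exp (x 1) + Real.exp (x 0) * Real.exp (x 2)))
      = x 1 + x 2 - x 0 - Real.log (Real.exp (x 1) + Real.exp (x 2))
    rw [key, Real.log_div (by positivity) (by positivity),
      Real.log_mul (by positivity) (by positivity),
      Real.log_mul (by positivity) (by positivity), Real.log_exp, Real.log_exp, Real.log_exp]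
    ring
  · exact Real.log_exp _
  · exact Real.log_exp _
  · show Real.log (Real.exp (x 3) * (Real.exp (x 1) + Real.exp (x 2)))
      = x 3 + Real.log (Real.exp (x 1) + Real.exp (x 2))
    rw [Real.log_mul (by positivity) (by positivity), Real.log_exp]

/-- The Jacobian matrix of the local move. -/
noncomputable def Mjac (p q : ℝ) : Matrix (Fin 4) (Fin 4) ℝ :=
  ![![-1, 1 - p, 1 - q, 0], ![0, 1, 0, 0], ![0, 0, 1, 0], ![0, p, q, 1]]

/-- The Jacobian as a continuous linear map. -/
noncomputable def Ljac (p q : ℝ) : (Fin 4 → ℝ) →L[ℝ] (Fin 4 → ℝ) :=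
  (Matrix.toLin' (Mjac p q)).toContinuousLinearMap

set_option maxHeartbeats 1600000 in
/-- The local move, in logarithmic coordinates, has Jacobian determinant `±1`. -/
theorem localMove_jacobian_pm_one (x : Fin 4 → ℝ) :
    |LinearMap.det (fderiv ℝ localMoveLog x).toLinearMap| = 1 := by
  rw [localMoveLog_eq_Fmap]
  set s : ℝ := Real.exp (x 1) + Real.exp (x 2) with hs
  have hspos : 0 < s := by positivity
  set p : ℝ := Real.exp (x 1) / s with hp
  set q : ℝ := Real.exp (x 2) / s with hq
  -- derivative of x ↦ exp (x 1) + exp (x 2)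
  have hproj : ∀ i : Fin 4, HasFDerivAt (fun y : Fin 4 → ℝ => y i)
      (ContinuousLinearMap.proj i : (Fin 4 → ℝ) →L[ℝ] ℝ) x := fun i =>
    (ContinuousLinearMap.proj (R := ℝ) (φ := fun _ : Fin 4 => ℝ) i).hasFDerivAt
  have h1 : HasFDerivAt (fun y : Fin 4 → ℝ => Real.exp (y 1) + Real.exp (y 2))
      (Real.exp (x 1) • (ContinuousLinearMap.proj (1 : Fin 4) : (Fin 4 → ℝ) →L[ℝ] ℝ)
        + Real.exp (x 2) • (ContinuousLinearMap.proj (2 : Fin 4) : (Fin 4 → ℝ) →L[ℝ] ℝ))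
      x :=
    ((hproj 1).exp).add ((hproj 2).exp)
  have hlog : HasFDerivAt (fun y : Fin 4 → ℝ => Real.log (Real.exp (y 1) + Real.exp (y 2)))
      (s⁻¹ • (Real.exp (x 1) • (ContinuousLinearMap.proj (1 : Fin 4) : (Fin 4 → ℝ) →L[ℝ] ℝ)
        + Real.exp (x 2) • (ContinuousLinearMap.proj (2 : Fin 4) : (Fin 4 → ℝ) →L[ℝ] ℝ))) x :=
    h1.log (ne_of_gt hspos)
  have hd : HasFDerivAt Fmap (Ljac p q) x := by
    rw [hasFDerivAt_pi']
    intro i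
    fin_cases i
    · have := ((((hproj 1).add (hproj 2)).sub (hproj 0)).sub hlog)
      refine this.congr_fderiv (Eq.symm ?_)
      refine ContinuousLinearMap.ext fun v => ?_
      simp [Ljac, Mjac, Matrix.toLin'_apply, Matrix.mulVec, dotProduct, Fin.sum_univ_four, Matrix.vecHead, Matrix.vecTail,
        hp, hq]
      erw [Matrix.toLin'_apply]
      simp [Matrix.mulVec, dotProduct, Fin.sum_univ_four]
      field_simp
      ring
    · have := hproj 1
      refine this.congr_fderiv (Eq.symm ?_)
      refine ContinuousLinearMap.ext fun v => ?_
      simp [Ljac, Mjac, Matrix.toLin'_apply, Matrix.mulVec, dotProduct, Fin.sum_univ_four, Matrix.vecHead, Matrix.vecTail]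
      erw [Matrix.toLin'_apply]
      simp [Matrix.mulVec, dotProduct, Fin.sum_univ_four]
    · have := hproj 2
      refine this.congr_fderiv (Eq.symm ?_)
      refine ContinuousLinearMap.ext fun v => ?_
      simp [Ljac, Mjac, Matrix.toLin'_apply, Matrix.mulVec, dotProduct, Fin.sum_univ_four, Matrix.vecHead, Matrix.vecTail]
      erw [Matrix.toLin'_apply]
      simp [Matrix.mulVec, dotProduct, Fin.sum_univ_four]
    · have := (hproj 3).add hlog
      refine this.congr_fderiv (Eq.symm ?_)
      refine ContinuousLinearMap.ext fun v => ?_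
      simp [Ljac, Mjac, Matrix.toLin'_apply, Matrix.mulVec, dotProduct, Fin.sum_univ_four, Matrix.vecHead, Matrix.vecTail,
        hp, hq]
      erw [Matrix.toLin'_apply]
      simp [Matrix.mulVec, dotProduct, Fin.sum_univ_four]
      field_simp
      ring
  rw [hd.fderiv]
  have : (Ljac p q).toLinearMap = Matrix.toLin' (Mjac p q) := rfl
  rw [this, LinearMap.det_toLin']
  have : (Mjac p q).det = -1 := by
    rw [Matrix.det_succ_row_zero]
    simp [Mjac, Fin.sum_univ_succ, Matrix.det_fin_three, Matrix.submatrix]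
  rw [this]
  norm_num
end

section
/- For any n×n matrix W with positive real entries, the geometric RSK image T = gRSK(W) satisfies t_{n,n} = Σ_{π} Π_{(i,j)∈π} w_{ij}, where the sum is over all down-right lattice paths π from (1,1) to (n,n). -/
/-- The geometric RSK local move `l_{ij}` acting on an array of positive reals
(1-based indexing).  For `i,j ≥ 2` it replaces the 2×2 submatrix
`(a b; c d)` with corners `(i-1,j-1)` and `(i,j)` by
`(bc/(a(b+c)), b; c, d(b+c))`; the boundary moves `l_{i1}`, `l_{1j}` multiply
`x_{i1}` by `x_{i-1,1}` and `x_{1j}` by `x_{1,j-1}`, and `l_{11}` is the identity. -/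
noncomputable def lmove (i j : ℕ) (X : ℕ → ℕ → ℝ) : ℕ → ℕ → ℝ :=
  if i = 1 ∧ j = 1 then X
  else if i = 1 then
    fun p q => if p = 1 ∧ q = j then X 1 (j - 1) * X 1 j else X p q
  else if j = 1 then
    fun p q => if p = i ∧ q = 1 then X (i - 1) 1 * X i 1 else X p q
  else
    fun p q =>
      if p = i - 1 ∧ q = j - 1 then
        X (i - 1) j * X i (j - 1) /
          (X (i - 1) (j - 1) * (X (i - 1) j + X i (j - 1)))
      else if p = i ∧ q = j then X i j * (X (i - 1) j + X i (j - 1))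
      else X p q

/-- `π^j_i = l_{ij} ∘ ⋯ ∘ l_{i1}`. -/
noncomputable def piMove (i j : ℕ) (X : ℕ → ℕ → ℝ) : ℕ → ℕ → ℝ :=
  (List.range j).foldl (fun Y k => lmove i (k + 1) Y) X

/-- `R_i = π^{m-i+1}_1 ∘ ⋯ ∘ π^m_i` (for `i ≤ m`), resp.
`R_i = π^1_{i-m+1} ∘ ⋯ ∘ π^m_i` (for `i ≥ m`): insertion of the `i`-th row of an
array with `m` columns. -/
noncomputable def Rmove (m i : ℕ) (X : ℕ → ℕ → ℝ) : ℕ → ℕ → ℝ :=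
  (List.range (min i m)).foldl (fun Y k => piMove (i - k) (m - k) Y) X

/-- gRSK on an `n × m` array: `gRSK = R_n ∘ ⋯ ∘ R_1`. -/
noncomputable def gRSK (n m : ℕ) (X : ℕ → ℕ → ℝ) : ℕ → ℕ → ℝ :=
  (List.range n).foldl (fun Y k => Rmove m (k + 1) Y) X

/-- `ρ^i_j = l_{1,j-i+1} ∘ ⋯ ∘ l_{i-1,j-1} ∘ l_{ij}` for `i ≤ j`, resp.
`ρ^i_j = l_{i-j+1,1} ∘ ⋯ ∘ l_{i-1,j-1} ∘ l_{ij}` for `i ≥ j`. -/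
noncomputable def rhoMove (i j : ℕ) (X : ℕ → ℕ → ℝ) : ℕ → ℕ → ℝ :=
  (List.range (min i j)).foldl (fun Y k => lmove (i - k) (j - k) Y) X

/-- One time step of geometric PNG: `ρ^1_t ∘ ⋯ ∘ ρ^t_1`. -/
noncomputable def pngStage (t : ℕ) (X : ℕ → ℕ → ℝ) : ℕ → ℕ → ℝ :=
  (List.range t).foldl (fun Y k => rhoMove (t - k) (1 + k) Y) X

/-- Geometric PNG on the triangular array `(w_{ij} : i+j-1 ≤ n)`:
`gPNG = (ρ^1_n ∘ ⋯ ∘ ρ^n_1) ∘ ⋯ ∘ (ρ^1_2 ∘ ρ^2_1) ∘ ρ^1_1`. -/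
noncomputable def gPNG (n : ℕ) (X : ℕ → ℕ → ℝ) : ℕ → ℕ → ℝ :=
  (List.range n).foldl (fun Y t => pngStage (t + 1) Y) X

/-- The weight of the down-right lattice path from `(1,1)` to `(p,q)` encoded by
the sequence of steps `s` (`true` = down, i.e. increase the first index): the
product of the entries of `w` along the path. -/
noncomputable def pathWeight (w : ℕ → ℕ → ℝ) (p q : ℕ) (s : Fin (p + q - 2) → Bool) : ℝ :=
  ∏ k ∈ Finset.range (p + q - 1),
    w (1 + ((List.ofFn s).take k).count true)
      (1 + (k - ((List.ofFn s).take k).count true))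

/-- The point-to-point polymer partition function
`Z_{p,q} = Σ_{π : (1,1) → (p,q) down-right} Π_{(i,j) ∈ π} w_{ij}`,
the sum running over all down-right lattice paths from `(1,1)` to `(p,q)`. -/
noncomputable def partitionFn (w : ℕ → ℕ → ℝ) (p q : ℕ) : ℝ :=
  ∑ s ∈ Finset.univ.filter
      (fun s : Fin (p + q - 2) → Bool => (List.ofFn s).count true = p - 1),
    pathWeight w p q s

lemma partitionFn_one_one (w : ℕ → ℕ → ℝ) : partitionFn w 1 1 = w 1 1 := by
  simp [partitionFn, pathWeight]

lemma ofFn_snoc {m : ℕ} (s : Fin m → Bool) (b : Bool) :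
    List.ofFn (Fin.snoc s b : Fin (m+1) → Bool) = List.ofFn s ++ [b] := by
  rw [List.ofFn_succ']
  simp [List.concat_eq_append]

lemma prefix_prod {m : ℕ} (w : ℕ → ℕ → ℝ) (s : Fin m → Bool) (b : Bool) :
    (∏ k ∈ Finset.range (m+1),
      w (1 + ((List.ofFn s ++ [b]).take k).count true)
        (1 + (k - ((List.ofFn s ++ [b]).take k).count true))) =
    ∏ k ∈ Finset.range (m+1),
      w (1 + ((List.ofFn s).take k).count true)
        (1 + (k - ((List.ofFn s).take k).count true)) := by
  refine Finset.prod_congr rfl (fun k hk => ?_)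
  rw [List.take_append_of_le_length]
  simp only [Finset.mem_range] at hk
  simp only [List.length_ofFn]
  omega

lemma partitionFn_rec (w : ℕ → ℕ → ℝ) (p q m : ℕ) (hp : 1 ≤ p) (hq : 1 ≤ q)
    (hm : p + q = m + 3) :
    partitionFn w p q =
      w p q * ((if 2 ≤ p then partitionFn w (p - 1) q else 0) +
               (if 2 ≤ q then partitionFn w p (q - 1) else 0)) := by
  have hq2 : p + q - 2 = m + 1 := by omega
  have hq1 : p + q - 1 = m + 2 := by omega
  have e1 : p - 1 + q - 2 = m := by omega
  have e2 : p - 1 + q - 1 = m + 1 := by omega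
  have e3 : p + (q - 1) - 2 = m := by omega
  have e4 : p + (q - 1) - 1 = m + 1 := by omega
  unfold partitionFn pathWeight
  rw [hq2, hq1, e1, e2, e3, e4, Finset.sum_filter]
  have step : ∀ G : (Fin (m+1) → Bool) → ℝ,
      (∑ s : Fin (m+1) → Bool, G s) =
        ∑ s : Fin m → Bool, (G (Fin.snoc s true) + G (Fin.snoc s false)) := by
    intro G
    rw [← Fintype.sum_equiv (Fin.snocEquiv (fun _ => Bool))
        (fun x => G (Fin.snoc x.2 x.1)) G (fun x => rfl),
      Fintype.sum_prod_type, Fintype.sum_bool, ← Finset.sum_add_distrib]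
  rw [step, Finset.sum_add_distrib]
  have htrue : (∑ s : Fin m → Bool,
      (if (List.ofFn (Fin.snoc s true : Fin (m+1) → Bool)).count true = p - 1 then
        ∏ k ∈ Finset.range (m + 2),
          w (1 + ((List.ofFn (Fin.snoc s true : Fin (m+1) → Bool)).take k).count true)
            (1 + (k - ((List.ofFn (Fin.snoc s true : Fin (m+1) → Bool)).take k).count true))
      else 0)) =
      (if 2 ≤ p then
        ∑ s ∈ Finset.univ.filter
            (fun s : Fin m → Bool => (List.ofFn s).count true = p - 1 - 1),
          ∏ k ∈ Finset.range (m + 1),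
            w (1 + ((List.ofFn s).take k).count true)
              (1 + (k - ((List.ofFn s).take k).count true))
      else 0) * w p q := by
    by_cases hp2 : 2 ≤ p
    · simp only [if_pos hp2, Finset.sum_filter, Finset.sum_mul]
      refine Finset.sum_congr rfl (fun s _ => ?_)
      rw [ofFn_snoc]
      have hcnt : (List.ofFn s ++ [true]).count true = (List.ofFn s).count true + 1 := by
        simp [List.count_append]
      rw [hcnt]
      by_cases hc : (List.ofFn s).count true = p - 1 - 1
      · rw [if_pos (by omega), if_pos hc]
        rw [Finset.prod_range_succ, prefix_prod]
        congr 1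
        have hfull : (List.ofFn s ++ [true]).take (m + 1) = List.ofFn s ++ [true] := by
          apply List.take_of_length_le; simp
        rw [hfull, hcnt]
        have hcle : (List.ofFn s).count true ≤ m := by
          calc (List.ofFn s).count true ≤ (List.ofFn s).length := List.count_le_length
          _ = m := by simp
        congr 1 <;> omega
      · rw [if_neg (by omega), if_neg hc, zero_mul]
    · simp only [if_neg hp2, zero_mul]
      refine Finset.sum_eq_zero (fun s _ => ?_)
      rw [if_neg]
      rw [ofFn_snoc]
      simp [List.count_append]
      omega
  have hfalse : (∑ s : Fin m → Bool,
      (if (List.ofFn (Fin.snoc s false : Fin (m+1) → Bool)).count true = p - 1 then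
        ∏ k ∈ Finset.range (m + 2),
          w (1 + ((List.ofFn (Fin.snoc s false : Fin (m+1) → Bool)).take k).count true)
            (1 + (k - ((List.ofFn (Fin.snoc s false : Fin (m+1) → Bool)).take k).count true))
      else 0)) =
      (if 2 ≤ q then
        ∑ s ∈ Finset.univ.filter
            (fun s : Fin m → Bool => (List.ofFn s).count true = p - 1),
          ∏ k ∈ Finset.range (m + 1),
            w (1 + ((List.ofFn s).take k).count true)
              (1 + (k - ((List.ofFn s).take k).count true))
      else 0) * w p q := by
    by_cases hq2' : 2 ≤ q
    · simp only [if_pos hq2', Finset.sum_filter, Finset.sum_mul]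
      refine Finset.sum_congr rfl (fun s _ => ?_)
      rw [ofFn_snoc]
      have hcnt : (List.ofFn s ++ [false]).count true = (List.ofFn s).count true := by
        simp [List.count_append]
      rw [hcnt]
      by_cases hc : (List.ofFn s).count true = p - 1
      · rw [if_pos hc, if_pos hc]
        rw [Finset.prod_range_succ, prefix_prod]
        congr 1
        have hfull : (List.ofFn s ++ [false]).take (m + 1) = List.ofFn s ++ [false] := by
          apply List.take_of_length_le; simp
        rw [hfull, hcnt, hc]
        congr 1 <;> omega
      · rw [if_neg hc, if_neg hc, zero_mul]
    · simp only [if_neg hq2', zero_mul]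
      refine Finset.sum_eq_zero (fun s _ => ?_)
      rw [if_neg]
      rw [ofFn_snoc]
      have hcle : (List.ofFn s).count true ≤ m := by
        calc (List.ofFn s).count true ≤ (List.ofFn s).length := List.count_le_length
        _ = m := by simp
      simp [List.count_append]
      omega
  rw [htrue, hfalse]
  ring

/-- locality of a single local move -/

lemma lmove_of_ne (i j : ℕ) (X : ℕ → ℕ → ℝ) (p q : ℕ)
    (h1 : ¬(p = i ∧ q = j)) (h2 : ¬(p = i - 1 ∧ q = j - 1)) :
    lmove i j X p q = X p q := by
  simp only [lmove]
  split_ifs with hij hi hj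
  · rfl
  · beta_reduce; rw [if_neg (by omega)]
  · beta_reduce; rw [if_neg (by omega)]
  · beta_reduce; rw [if_neg (by omega), if_neg (by omega)]

lemma lmove_corner (i j : ℕ) (X : ℕ → ℕ → ℝ) (hi : 2 ≤ i) (hj : 2 ≤ j) :
    lmove i j X i j = X i j * (X (i - 1) j + X i (j - 1)) := by
  simp only [lmove]
  split_ifs <;> try beta_reduce
  all_goals first
    | (split_ifs <;> first | rfl | omega | (exfalso; omega) | tauto)
    | (exfalso; omega)
    | rfl

lemma lmove_col1 (i : ℕ) (X : ℕ → ℕ → ℝ) (hi : 2 ≤ i) :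
    lmove i 1 X i 1 = X (i - 1) 1 * X i 1 := by
  simp only [lmove]
  split_ifs <;> try beta_reduce
  all_goals first
    | (split_ifs <;> first | rfl | omega | (exfalso; omega) | tauto)
    | (exfalso; omega)
    | rfl

lemma lmove_row1 (j : ℕ) (X : ℕ → ℕ → ℝ) (hj : 2 ≤ j) :
    lmove 1 j X 1 j = X 1 (j - 1) * X 1 j := by
  simp only [lmove]
  split_ifs <;> try beta_reduce
  all_goals first
    | (split_ifs <;> first | rfl | omega | (exfalso; omega) | tauto)
    | (exfalso; omega)
    | rfl

lemma piMove_succ (i j : ℕ) (X : ℕ → ℕ → ℝ) :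
    piMove i (j + 1) X = lmove i (j + 1) (piMove i j X) := by
  unfold piMove
  rw [List.range_succ, List.foldl_append, List.foldl_cons, List.foldl_nil]

/-- rows other than `i` and `i-1` are untouched by `piMove` -/
lemma piMove_row_ne (i j : ℕ) (X : ℕ → ℕ → ℝ) (p q : ℕ)
    (h1 : p ≠ i) (h2 : p ≠ i - 1) : piMove i j X p q = X p q := by
  induction j with
  | zero => rfl
  | succ j ih =>
      rw [piMove_succ, lmove_of_ne _ _ _ _ _ (by tauto) (by tauto), ih]

/-- in row `i`, columns beyond `j` are untouched -/
lemma piMove_row_i (i j : ℕ) (X : ℕ → ℕ → ℝ) (q : ℕ) (hi : 1 ≤ i) (hq : j < q) :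
    piMove i j X i q = X i q := by
  induction j with
  | zero => rfl
  | succ j ih =>
      rw [piMove_succ, lmove_of_ne _ _ _ _ _ (by omega) (by omega), ih (by omega)]

/-- in row `i-1`, columns `≥ j` are untouched -/
lemma piMove_row_above (i j : ℕ) (X : ℕ → ℕ → ℝ) (q : ℕ) (hi : 2 ≤ i) (hq : j ≤ q) :
    piMove i j X (i - 1) q = X (i - 1) q := by
  induction j with
  | zero => rfl
  | succ j ih =>
      rw [piMove_succ, lmove_of_ne _ _ _ _ _ (by omega) (by omega), ih (by omega)]

/-- the main computation: inserting a row via `piMove` (case `i ≥ 2`) -/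
lemma piMove_main (r n : ℕ) (hr : 2 ≤ r) (A : ℕ → ℕ → ℝ) (Z : ℕ → ℝ)
    (h1 : Z 1 = A (r - 1) 1 * A r 1)
    (h2 : ∀ q, 2 ≤ q → q ≤ n → Z q = A r q * (A (r - 1) q + Z (q - 1))) :
    ∀ j, j ≤ n → ∀ q, 1 ≤ q → q ≤ j → piMove r j A r q = Z q := by
  intro j
  induction j with
  | zero => omega
  | succ j ih =>
      intro hj q hq1 hq2
      rcases Nat.lt_or_ge q (j + 1) with h | h
      · rw [piMove_succ, lmove_of_ne _ _ _ _ _ (by omega) (by omega)]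
        exact ih (by omega) q hq1 (by omega)
      · have hq : q = j + 1 := by omega
        subst hq
        rcases Nat.eq_zero_or_pos j with h0 | h0
        · subst h0
          rw [piMove_succ, lmove_col1 _ _ hr]
          unfold piMove
          simp only [List.range_zero, List.foldl_nil]
          exact h1.symm
        · rw [piMove_succ, lmove_corner _ _ _ hr (by omega)]
          simp only [Nat.add_sub_cancel]
          rw [ih (by omega) j h0 le_rfl,
            piMove_row_i _ _ _ _ (by omega) (by omega),
            piMove_row_above _ _ _ _ hr (by omega)]
          exact (h2 (j + 1) (by omega) hj).symm

/-- the main computation: inserting the first row (case `i = 1`) -/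
lemma piMove_main1 (n : ℕ) (A : ℕ → ℕ → ℝ) (Z : ℕ → ℝ)
    (h1 : Z 1 = A 1 1)
    (h2 : ∀ q, 2 ≤ q → q ≤ n → Z q = Z (q - 1) * A 1 q) :
    ∀ j, j ≤ n → ∀ q, 1 ≤ q → q ≤ j → piMove 1 j A 1 q = Z q := by
  intro j
  induction j with
  | zero => omega
  | succ j ih =>
      intro hj q hq1 hq2
      rcases Nat.lt_or_ge q (j + 1) with h | h
      · rw [piMove_succ, lmove_of_ne _ _ _ _ _ (by omega) (by omega)]
        exact ih (by omega) q hq1 (by omega)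
      · have hq : q = j + 1 := by omega
        subst hq
        rcases Nat.eq_zero_or_pos j with h0 | h0
        · subst h0
          rw [piMove_succ]
          unfold piMove
          simp only [List.range_zero, List.foldl_nil]
          unfold lmove
          rw [if_pos ⟨rfl, rfl⟩]
          exact h1.symm
        · rw [piMove_succ, lmove_row1 _ _ (by omega)]
          simp only [Nat.add_sub_cancel]
          rw [ih (by omega) j h0 le_rfl,
            piMove_row_i _ _ _ _ (by omega) (by omega)]
          exact (h2 (j + 1) (by omega) hj).symm

/-- a fold of `piMove`s with row indices `f k < p` leaves row `p` intact -/
lemma foldl_piMove_untouched (f g : ℕ → ℕ) (X : ℕ → ℕ → ℝ) (p q : ℕ) :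
    ∀ s : ℕ, (∀ k, k < s → f k < p) →
      ((List.range s).foldl (fun Y k => piMove (f k) (g k) Y) X) p q = X p q := by
  intro s
  induction s with
  | zero => intro _; rfl
  | succ s ih =>
      intro h
      rw [List.range_succ, List.foldl_append, List.foldl_cons, List.foldl_nil]
      rw [piMove_row_ne _ _ _ _ _ (by have := h s (by omega); omega)
        (by have := h s (by omega); omega)]
      exact ih (fun k hk => h k (by omega))

lemma Rmove_high (m i : ℕ) (X : ℕ → ℕ → ℝ) (p q : ℕ) (hp : i < p) :
    Rmove m i X p q = X p q := by
  unfold Rmove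
  exact foldl_piMove_untouched _ _ _ _ _ _ (fun k _ => by omega)

lemma Rmove_row (m i : ℕ) (X : ℕ → ℕ → ℝ) (q : ℕ) (hi : 1 ≤ i) (him : i ≤ m) :
    Rmove m i X i q = piMove i m X i q := by
  unfold Rmove
  have hmin : min i m = (i - 1) + 1 := by omega
  rw [hmin, List.range_succ_eq_map, List.foldl_cons, List.foldl_map]
  simp only [Nat.sub_zero]
  exact foldl_piMove_untouched (fun k => i - (k + 1)) (fun k => m - (k + 1))
    (piMove i m X) i q (i - 1) (fun k hk => show i - (k + 1) < i by omega)

lemma gRSK_succ (m r : ℕ) (X : ℕ → ℕ → ℝ) :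
    gRSK (r + 1) m X = Rmove m (r + 1) (gRSK r m X) := by
  unfold gRSK
  rw [List.range_succ, List.foldl_append, List.foldl_cons, List.foldl_nil]

lemma gRSK_zero (m : ℕ) (X : ℕ → ℕ → ℝ) : gRSK 0 m X = X := by
  simp [gRSK]

/-- For an `n×n` positive matrix `W`, the bottom-right entry of `gRSK(W)` equals
the polymer partition function `Z_{n,n}`, the sum over all down-right paths from
`(1,1)` to `(n,n)` of the products of the entries along the path. -/
theorem gRSK_corner_eq_partitionFn (n : ℕ) (hn : 1 ≤ n) (W : ℕ → ℕ → ℝ)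
    (hW : ∀ i j, 1 ≤ i → i ≤ n → 1 ≤ j → j ≤ n → 0 < W i j) :
    gRSK n n W n n = partitionFn W n n := by
  have main : ∀ r, 1 ≤ r → r ≤ n →
      (∀ p q, r < p → gRSK r n W p q = W p q) ∧
      (∀ q, 1 ≤ q → q ≤ n → gRSK r n W r q = partitionFn W r q) := by
    intro r
    induction r with
    | zero => omega
    | succ r ih =>
        intro _ hrn
        constructor
        · intro p q hp
          rw [gRSK_succ, Rmove_high _ _ _ _ _ hp]
          rcases Nat.eq_zero_or_pos r with h0 | h0
          · subst h0; rw [gRSK_zero]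
          · exact (ih h0 (by omega)).1 p q (by omega)
        · intro q hq1 hq2
          rw [gRSK_succ, Rmove_row _ _ _ _ (by omega) (by omega)]
          rcases Nat.eq_zero_or_pos r with h0 | h0
          · subst h0
            rw [gRSK_zero]
            refine piMove_main1 n W (partitionFn W 1)
              (partitionFn_one_one W) (fun q hq hqn => ?_) n le_rfl q hq1 hq2
            rw [partitionFn_rec W 1 q (q - 2) le_rfl (by omega) (by omega),
              if_neg (by omega), if_pos hq]
            ring
          · have ihr := ih h0 (by omega)
            have hA1 : ∀ q, 1 ≤ q → q ≤ n → gRSK r n W (r + 1 - 1) q = partitionFn W r q := by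
              intro q hq hqn
              simpa using ihr.2 q hq hqn
            have hA2 : ∀ q, gRSK r n W (r + 1) q = W (r + 1) q :=
              fun q => ihr.1 (r + 1) q (by omega)
            refine piMove_main (r + 1) n (by omega) (gRSK r n W)
              (partitionFn W (r + 1)) ?_ ?_ n le_rfl q hq1 hq2
            · rw [hA1 1 le_rfl hn, hA2 1,
                partitionFn_rec W (r + 1) 1 (r - 1) (by omega) le_rfl (by omega),
                if_pos (by omega), if_neg (by omega)]
              simp only [Nat.add_sub_cancel]
              ring
            · intro q hq hqn
              rw [hA1 q (by omega) hqn, hA2 q,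
                partitionFn_rec W (r + 1) q (r + q - 2) (by omega) (by omega) (by omega),
                if_pos (by omega), if_pos hq]
              simp only [Nat.add_sub_cancel]
  exact (main n hn le_rfl).2 n hn le_rfl
end

section
/- The geometric PNG map on triangular arrays is volume preserving in logarithmic variables: if H = (h_{ij})_{i+j-1≤n} = gPNG((w_{ij})_{i+j-1≤n}) with all entries positive, then the map (log w_{ij}) ↦ (log h_{ij}) has Jacobian determinant ±1. -/
/-- Index set of the triangular array `(i,j)` with `1 ≤ i, 1 ≤ j, i+j-1 ≤ n`. -/
def triFinset (n : ℕ) : Finset (ℕ × ℕ) :=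
  (Finset.Icc 1 n ×ˢ Finset.Icc 1 n).filter fun p => p.1 + p.2 - 1 ≤ n

/-- gPNG on a triangular array, viewed in logarithmic coordinates as a map
`ℝ^{triangle} → ℝ^{triangle}`. -/
noncomputable def gPNGlog (n : ℕ) (x : {p // p ∈ triFinset n} → ℝ) :
    {p // p ∈ triFinset n} → ℝ :=
  fun p => Real.log
    (gPNG n
      (fun i j => if h : (i, j) ∈ triFinset n then Real.exp (x ⟨(i, j), h⟩) else 1)
      p.1.1 p.1.2)


set_option linter.unusedSectionVars false
set_option maxHeartbeats 1600000

section VPsec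

variable {ι : Type*} [Fintype ι] [DecidableEq ι]

def VP (F : (ι → ℝ) → (ι → ℝ)) : Prop :=
  Differentiable ℝ F ∧ ∀ x, |LinearMap.det (fderiv ℝ F x).toLinearMap| = 1

lemma VP.id' : VP (fun x : ι → ℝ => x) := by
  refine ⟨differentiable_id, fun x => ?_⟩
  rw [fderiv_id']
  simp

lemma VP.comp {F G : (ι → ℝ) → (ι → ℝ)} (hF : VP F) (hG : VP G) :
    VP (fun x => F (G x)) := by
  refine ⟨fun x => (hF.1 (G x)).comp x (hG.1 x), fun x => ?_⟩
  have h : fderiv ℝ (fun x => F (G x)) x = (fderiv ℝ F (G x)).comp (fderiv ℝ G x) :=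
    fderiv_comp x (hF.1 (G x)) (hG.1 x)
  rw [h, ContinuousLinearMap.toLinearMap_comp, LinearMap.det_comp, abs_mul, hF.2, hG.2, one_mul]

lemma VP.foldl {α : Type*} (g : α → (ι → ℝ) → (ι → ℝ)) (l : List α)
    (h : ∀ a ∈ l, VP (g a)) : VP (fun x => l.foldl (fun y a => g a y) x) := by
  induction l with
  | nil => exact VP.id'
  | cons a l ih =>
      simp only [List.foldl_cons]
      exact (ih (fun b hb => h b (List.mem_cons_of_mem _ hb))).comp
        (h a List.mem_cons_self)

noncomputable def primMap (r : ι) (φ : (ι → ℝ) → ℝ) : (ι → ℝ) → (ι → ℝ) :=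
  fun x p => x p + if p = r then φ x else 0

lemma primMap_eq (r : ι) (φ : (ι → ℝ) → ℝ) :
    primMap r φ = fun x => x + φ x • (Pi.single r 1 : ι → ℝ) := by
  funext x p
  simp [primMap, Pi.single_apply, mul_ite]

lemma hasFDerivAt_primMap (r : ι) (φ : (ι → ℝ) → ℝ) (ℓ : (ι → ℝ) →L[ℝ] ℝ) {x : ι → ℝ}
    (hφ : HasFDerivAt φ ℓ x) :
    HasFDerivAt (primMap r φ)
      (ContinuousLinearMap.id ℝ (ι → ℝ) + ℓ.smulRight (Pi.single r 1 : ι → ℝ)) x := by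
  rw [primMap_eq]
  exact (hasFDerivAt_id x).add (hφ.smul_const _)

lemma det_id_add_smulRight (r : ι) (ℓ : (ι → ℝ) →L[ℝ] ℝ) :
    LinearMap.det (ContinuousLinearMap.id ℝ (ι → ℝ)
        + ℓ.smulRight (Pi.single r 1 : ι → ℝ)).toLinearMap
      = 1 + ℓ (Pi.single r 1 : ι → ℝ) := by
  rw [← LinearMap.det_toMatrix']
  have hM : LinearMap.toMatrix'
        ((ContinuousLinearMap.id ℝ (ι → ℝ) + ℓ.smulRight (Pi.single r 1 : ι → ℝ)).toLinearMap)
      = 1 + Matrix.replicateCol Unit (Pi.single r 1 : ι → ℝ)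
            * Matrix.replicateRow Unit (fun q => ℓ (Pi.single q 1 : ι → ℝ)) := by
    ext p q
    rw [LinearMap.toMatrix'_apply]
    have h1 : (fun j' => if j' = q then (1:ℝ) else 0) = (Pi.single q 1 : ι → ℝ) := by
      funext j'; simp [Pi.single_apply]
    simp [Matrix.mul_apply, Matrix.one_apply, Matrix.replicateCol_apply, Matrix.replicateRow_apply,
      Pi.single_apply, mul_comm]
  rw [hM, Matrix.det_one_add_replicateCol_mul_replicateRow]
  simp [dotProduct, Pi.single_apply, mul_ite, Finset.sum_ite_eq']

lemma vp_prim (r : ι) (φ : (ι → ℝ) → ℝ) (ℓ : (ι → ℝ) → ((ι → ℝ) →L[ℝ] ℝ))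
    (hφ : ∀ x, HasFDerivAt φ (ℓ x) x)
    (h1 : ∀ x, |1 + ℓ x (Pi.single r 1 : ι → ℝ)| = 1) :
    VP (primMap r φ) := by
  refine ⟨fun x => (hasFDerivAt_primMap r φ (ℓ x) (hφ x)).differentiableAt, fun x => ?_⟩
  rw [(hasFDerivAt_primMap r φ (ℓ x) (hφ x)).fderiv, det_id_add_smulRight]
  exact h1 x

lemma vp_coord (r s : ι) (hs : s ≠ r) : VP (primMap r (fun x => x s)) := by
  have hd : ∀ x : ι → ℝ, HasFDerivAt (fun y : ι → ℝ => y s)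
      (ContinuousLinearMap.proj s : (ι → ℝ) →L[ℝ] ℝ) x :=
    fun x => (ContinuousLinearMap.proj s : (ι → ℝ) →L[ℝ] ℝ).hasFDerivAt
  refine vp_prim r _ _ hd (fun x => ?_)
  simp [Pi.single_eq_of_ne hs]

lemma vp_neg (r : ι) : VP (primMap r (fun x => -2 * x r)) := by
  have hd : ∀ x : ι → ℝ, HasFDerivAt (fun y : ι → ℝ => -2 * y r)
      ((-2 : ℝ) • (ContinuousLinearMap.proj r : (ι → ℝ) →L[ℝ] ℝ)) x := by
    intro x
    exact ((ContinuousLinearMap.proj r : (ι → ℝ) →L[ℝ] ℝ).hasFDerivAt (x := x)).const_mul (-2)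
  refine vp_prim r _ _ hd (fun x => ?_)
  norm_num

lemma vp_logshear (r b c : ι) (hb : b ≠ r) (hc : c ≠ r) (ε : ℝ) :
    VP (primMap r (fun x => ε * Real.log (Real.exp (x b) + Real.exp (x c)))) := by
  have hpos : ∀ x : ι → ℝ, 0 < Real.exp (x b) + Real.exp (x c) := fun x =>
    add_pos (Real.exp_pos _) (Real.exp_pos _)
  have hd : ∀ x : ι → ℝ,
      HasFDerivAt (fun y : ι → ℝ => ε * Real.log (Real.exp (y b) + Real.exp (y c)))
        (ε • ((Real.exp (x b) + Real.exp (x c))⁻¹ •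
          (Real.exp (x b) • (ContinuousLinearMap.proj b : (ι → ℝ) →L[ℝ] ℝ)
            + Real.exp (x c) • (ContinuousLinearMap.proj c : (ι → ℝ) →L[ℝ] ℝ)))) x := by
    intro x
    have hb' : HasFDerivAt (fun y : ι → ℝ => Real.exp (y b))
        (Real.exp (x b) • (ContinuousLinearMap.proj b : (ι → ℝ) →L[ℝ] ℝ)) x :=
      (Real.hasDerivAt_exp (x b)).comp_hasFDerivAt (f := fun y : ι → ℝ => y b) x
        ((ContinuousLinearMap.proj b : (ι → ℝ) →L[ℝ] ℝ).hasFDerivAt)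
    have hc' : HasFDerivAt (fun y : ι → ℝ => Real.exp (y c))
        (Real.exp (x c) • (ContinuousLinearMap.proj c : (ι → ℝ) →L[ℝ] ℝ)) x :=
      (Real.hasDerivAt_exp (x c)).comp_hasFDerivAt (f := fun y : ι → ℝ => y c) x
        ((ContinuousLinearMap.proj c : (ι → ℝ) →L[ℝ] ℝ).hasFDerivAt)
    have hlog : HasFDerivAt
        (fun y : ι → ℝ => Real.log (Real.exp (y b) + Real.exp (y c)))
        ((Real.exp (x b) + Real.exp (x c))⁻¹ •
          (Real.exp (x b) • (ContinuousLinearMap.proj b : (ι → ℝ) →L[ℝ] ℝ)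
            + Real.exp (x c) • (ContinuousLinearMap.proj c : (ι → ℝ) →L[ℝ] ℝ))) x :=
      (Real.hasDerivAt_log (ne_of_gt (hpos x))).comp_hasFDerivAt
        (f := fun y : ι → ℝ => Real.exp (y b) + Real.exp (y c)) x (hb'.add hc')
    exact hlog.const_mul ε
  refine vp_prim r _ _ hd (fun x => ?_)
  simp [Pi.single_eq_of_ne hb, Pi.single_eq_of_ne hc]

end VPsec

lemma mem_tri {n i j : ℕ} : (i, j) ∈ triFinset n ↔ 1 ≤ i ∧ 1 ≤ j ∧ i + j ≤ n + 1 := by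
  simp only [triFinset, Finset.mem_filter, Finset.mem_product, Finset.mem_Icc]
  omega

noncomputable def tget (n : ℕ) (x : {p // p ∈ triFinset n} → ℝ) (i j : ℕ) : ℝ :=
  if h : (i, j) ∈ triFinset n then x ⟨(i, j), h⟩ else 0

noncomputable def Efun (n : ℕ) (x : {p // p ∈ triFinset n} → ℝ) : ℕ → ℕ → ℝ :=
  fun i j => Real.exp (tget n x i j)

noncomputable def Llog (n i j : ℕ) (x : {p // p ∈ triFinset n} → ℝ) :
    {p // p ∈ triFinset n} → ℝ :=
  if i = 1 ∧ j = 1 then x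
  else if i = 1 then
    fun p => if p.1 = (1, j) then tget n x 1 (j - 1) + tget n x 1 j else x p
  else if j = 1 then
    fun p => if p.1 = (i, 1) then tget n x (i - 1) 1 + tget n x i 1 else x p
  else
    fun p =>
      if p.1 = (i - 1, j - 1) then
        tget n x (i - 1) j + tget n x i (j - 1) - tget n x (i - 1) (j - 1)
          - Real.log (Real.exp (tget n x (i - 1) j) + Real.exp (tget n x i (j - 1)))
      else if p.1 = (i, j) then
        tget n x i j
          + Real.log (Real.exp (tget n x (i - 1) j) + Real.exp (tget n x i (j - 1)))
      else x p

lemma tget_fun_eq {n : ℕ} (f : {p // p ∈ triFinset n} → ℝ) (x : {p // p ∈ triFinset n} → ℝ)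
    (a b : ℕ) (h : ∀ h' : (a, b) ∈ triFinset n, f ⟨(a, b), h'⟩ = x ⟨(a, b), h'⟩) :
    tget n f a b = tget n x a b := by
  rw [tget, tget]
  by_cases hm : (a, b) ∈ triFinset n
  · rw [dif_pos hm, dif_pos hm, h hm]
  · rw [dif_neg hm, dif_neg hm]

lemma tget_fun_val {n : ℕ} (f : {p // p ∈ triFinset n} → ℝ)
    (a b : ℕ) (h : (a, b) ∈ triFinset n) : tget n f a b = f ⟨(a, b), h⟩ := dif_pos h

lemma lmove_comm {n i j : ℕ} (hi : 1 ≤ i) (hj : 1 ≤ j) (hij : i + j ≤ n + 1)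
    (x : {p // p ∈ triFinset n} → ℝ) :
    lmove i j (Efun n x) = Efun n (Llog n i j x) := by
  by_cases h11 : i = 1 ∧ j = 1
  · rw [lmove, Llog, if_pos h11, if_pos h11]
  by_cases hi1 : i = 1
  · subst hi1
    have hj2 : 2 ≤ j := by omega
    have hm : ((1 : ℕ), j) ∈ triFinset n := mem_tri.2 (by omega)
    rw [lmove, Llog, if_neg h11, if_neg h11, if_pos rfl, if_pos rfl]
    have hval : tget n
        (fun p => if p.1 = ((1 : ℕ), j) then tget n x 1 (j - 1) + tget n x 1 j else x p) 1 j
        = tget n x 1 (j - 1) + tget n x 1 j := by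
      rw [tget_fun_val _ 1 j hm]; simp
    funext a b
    simp only [Efun]
    by_cases hab : a = 1 ∧ b = j
    · rw [if_pos hab, hab.1, hab.2, hval, Real.exp_add]
    · rw [if_neg hab]
      congr 1
      refine (tget_fun_eq _ x a b fun h' => ?_).symm
      have hne : ¬((a, b) = ((1 : ℕ), j)) := by simp only [Prod.mk.injEq]; tauto
      show (if (a, b) = ((1 : ℕ), j) then _ else x ⟨(a, b), h'⟩) = x ⟨(a, b), h'⟩
      rw [if_neg hne]
  by_cases hj1 : j = 1
  · subst hj1
    have hi2 : 2 ≤ i := by omega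
    have hm : (i, (1 : ℕ)) ∈ triFinset n := mem_tri.2 (by omega)
    rw [lmove, Llog, if_neg h11, if_neg h11, if_neg hi1, if_neg hi1, if_pos rfl, if_pos rfl]
    have hval : tget n
        (fun p => if p.1 = (i, (1 : ℕ)) then tget n x (i - 1) 1 + tget n x i 1 else x p) i 1
        = tget n x (i - 1) 1 + tget n x i 1 := by
      rw [tget_fun_val _ i 1 hm]; simp
    funext a b
    simp only [Efun]
    by_cases hab : a = i ∧ b = 1
    · rw [if_pos hab, hab.1, hab.2, hval, Real.exp_add]
    · rw [if_neg hab]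
      congr 1
      refine (tget_fun_eq _ x a b fun h' => ?_).symm
      have hne : ¬((a, b) = (i, (1 : ℕ))) := by simp only [Prod.mk.injEq]; tauto
      show (if (a, b) = (i, (1 : ℕ)) then _ else x ⟨(a, b), h'⟩) = x ⟨(a, b), h'⟩
      rw [if_neg hne]
  -- interior case
  have hi2 : 2 ≤ i := by omega
  have hj2 : 2 ≤ j := by omega
  have hmr : (i - 1, j - 1) ∈ triFinset n := mem_tri.2 (by omega)
  have hmq : (i, j) ∈ triFinset n := mem_tri.2 (by omega)
  have hposBC : 0 < Real.exp (tget n x (i - 1) j) + Real.exp (tget n x i (j - 1)) :=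
    add_pos (Real.exp_pos _) (Real.exp_pos _)
  have hner : ¬((i, j) = (i - 1, j - 1)) := by simp only [Prod.mk.injEq]; omega
  rw [lmove, Llog, if_neg h11, if_neg h11, if_neg hi1, if_neg hi1, if_neg hj1, if_neg hj1]
  set G : {p // p ∈ triFinset n} → ℝ := fun p =>
      if p.1 = (i - 1, j - 1) then
        tget n x (i - 1) j + tget n x i (j - 1) - tget n x (i - 1) (j - 1)
          - Real.log (Real.exp (tget n x (i - 1) j) + Real.exp (tget n x i (j - 1)))
      else if p.1 = (i, j) then
        tget n x i j
          + Real.log (Real.exp (tget n x (i - 1) j) + Real.exp (tget n x i (j - 1)))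
      else x p with hG
  have hvalr : tget n G (i - 1) (j - 1)
      = tget n x (i - 1) j + tget n x i (j - 1) - tget n x (i - 1) (j - 1)
          - Real.log (Real.exp (tget n x (i - 1) j) + Real.exp (tget n x i (j - 1))) := by
    rw [tget_fun_val G (i - 1) (j - 1) hmr, hG]
    simp
  have hvalq : tget n G i j
      = tget n x i j
          + Real.log (Real.exp (tget n x (i - 1) j) + Real.exp (tget n x i (j - 1))) := by
    rw [tget_fun_val G i j hmq, hG]
    show (if (i, j) = (i - 1, j - 1) then _ else if (i, j) = (i, j) then _ else x ⟨(i, j), hmq⟩)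
      = _
    rw [if_neg hner, if_pos rfl]
  funext a b
  simp only [Efun]
  by_cases hab1 : a = i - 1 ∧ b = j - 1
  · rw [if_pos hab1, hab1.1, hab1.2, hvalr, Real.exp_sub, Real.exp_sub, Real.exp_add,
      Real.exp_log hposBC, div_div]
  · rw [if_neg hab1]
    by_cases hab2 : a = i ∧ b = j
    · rw [if_pos hab2, hab2.1, hab2.2, hvalq, Real.exp_add, Real.exp_log hposBC]
    · rw [if_neg hab2]
      congr 1
      refine (tget_fun_eq G x a b fun h' => ?_).symm
      have h1 : ¬((a, b) = (i - 1, j - 1)) := by simp only [Prod.mk.injEq]; tauto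
      have h2 : ¬((a, b) = (i, j)) := by simp only [Prod.mk.injEq]; tauto
      show (if (a, b) = (i - 1, j - 1) then _ else if (a, b) = (i, j) then _
          else x ⟨(a, b), h'⟩) = x ⟨(a, b), h'⟩
      rw [if_neg h1, if_neg h2]

section LP

variable {n : ℕ}

lemma coe_ne {a b : ℕ × ℕ} {ha : a ∈ triFinset n} {hb : b ∈ triFinset n}
    (h : a ≠ b) : (⟨a, ha⟩ : {p // p ∈ triFinset n}) ≠ ⟨b, hb⟩ := by
  simp [Subtype.ext_iff, h]

lemma vp_llog {i j : ℕ} (hi : 1 ≤ i) (hj : 1 ≤ j) (hij : i + j ≤ n + 1) :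
    VP (Llog n i j) := by
  by_cases h11 : i = 1 ∧ j = 1
  · have h : Llog n i j = fun x => x := by funext x; rw [Llog, if_pos h11]
    rw [h]; exact VP.id'
  by_cases hi1 : i = 1
  · subst hi1
    have hj2 : 2 ≤ j := by omega
    have hmr : ((1 : ℕ), j) ∈ triFinset n := mem_tri.2 (by omega)
    have hms : ((1 : ℕ), j - 1) ∈ triFinset n := mem_tri.2 (by omega)
    set r : {p // p ∈ triFinset n} := ⟨(1, j), hmr⟩ with hr
    set s : {p // p ∈ triFinset n} := ⟨(1, j - 1), hms⟩ with hs
    have hsr : s ≠ r := coe_ne (by intro h; injection h with h1 h2; omega)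
    have heq : Llog n 1 j = primMap r (fun x => x s) := by
      funext x p
      rw [Llog, if_neg h11, if_pos rfl, primMap]
      have ht1 : tget n x 1 (j - 1) = x s := tget_fun_val x 1 (j - 1) hms
      have ht2 : tget n x 1 j = x r := tget_fun_val x 1 j hmr
      rw [ht1, ht2]
      by_cases hp : p = r
      · subst hp
        rw [if_pos rfl, if_pos rfl]
        ring
      · have hp' : ¬((p : ℕ × ℕ) = (1, j)) := fun h => hp (Subtype.ext h)
        rw [if_neg hp', if_neg hp, add_zero]
    rw [heq]; exact vp_coord r s hsr
  by_cases hj1 : j = 1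
  · subst hj1
    have hi2 : 2 ≤ i := by omega
    have hmr : (i, (1 : ℕ)) ∈ triFinset n := mem_tri.2 (by omega)
    have hms : (i - 1, (1 : ℕ)) ∈ triFinset n := mem_tri.2 (by omega)
    set r : {p // p ∈ triFinset n} := ⟨(i, 1), hmr⟩ with hr
    set s : {p // p ∈ triFinset n} := ⟨(i - 1, 1), hms⟩ with hs
    have hsr : s ≠ r := coe_ne (by intro h; injection h with h1 h2; omega)
    have heq : Llog n i 1 = primMap r (fun x => x s) := by
      funext x p
      rw [Llog, if_neg h11, if_neg hi1, if_pos rfl, primMap]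
      have ht1 : tget n x (i - 1) 1 = x s := tget_fun_val x (i - 1) 1 hms
      have ht2 : tget n x i 1 = x r := tget_fun_val x i 1 hmr
      rw [ht1, ht2]
      by_cases hp : p = r
      · subst hp
        rw [if_pos rfl, if_pos rfl]
        ring
      · have hp' : ¬((p : ℕ × ℕ) = (i, 1)) := fun h => hp (Subtype.ext h)
        rw [if_neg hp', if_neg hp, add_zero]
    rw [heq]; exact vp_coord r s hsr
  -- interior
  have hi2 : 2 ≤ i := by omega
  have hj2 : 2 ≤ j := by omega
  have hmr : (i - 1, j - 1) ∈ triFinset n := mem_tri.2 (by omega)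
  have hmq : (i, j) ∈ triFinset n := mem_tri.2 (by omega)
  have hmb : (i - 1, j) ∈ triFinset n := mem_tri.2 (by omega)
  have hmc : (i, j - 1) ∈ triFinset n := mem_tri.2 (by omega)
  set r : {p // p ∈ triFinset n} := ⟨(i - 1, j - 1), hmr⟩ with hr
  set q : {p // p ∈ triFinset n} := ⟨(i, j), hmq⟩ with hq
  set b : {p // p ∈ triFinset n} := ⟨(i - 1, j), hmb⟩ with hb
  set c : {p // p ∈ triFinset n} := ⟨(i, j - 1), hmc⟩ with hc
  have hbr : b ≠ r := coe_ne (by intro h; injection h with h1 h2; omega)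
  have hcr : c ≠ r := coe_ne (by intro h; injection h with h1 h2; omega)
  have hbq : b ≠ q := coe_ne (by intro h; injection h with h1 h2; omega)
  have hcq : c ≠ q := coe_ne (by intro h; injection h with h1 h2; omega)
  have hrq : r ≠ q := coe_ne (by intro h; injection h with h1 h2; omega)
  have hqr : q ≠ r := hrq.symm
  have heq : Llog n i j = fun x =>
      primMap q (fun y => 1 * Real.log (Real.exp (y b) + Real.exp (y c)))
        (primMap r (fun y => -1 * Real.log (Real.exp (y b) + Real.exp (y c)))
          (primMap r (fun y => y b)
            (primMap r (fun y => y c)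
              (primMap r (fun y => -2 * y r) x)))) := by
    funext x p
    rw [Llog, if_neg h11, if_neg hi1, if_neg hj1]
    have ht1 : tget n x (i - 1) j = x b := tget_fun_val x (i - 1) j hmb
    have ht2 : tget n x i (j - 1) = x c := tget_fun_val x i (j - 1) hmc
    have ht3 : tget n x (i - 1) (j - 1) = x r := tget_fun_val x (i - 1) (j - 1) hmr
    have ht4 : tget n x i j = x q := tget_fun_val x i j hmq
    rw [ht1, ht2, ht3, ht4]
    simp only [primMap, if_neg hbr, if_neg hcr, if_neg hbq, if_neg hcq, add_zero]
    by_cases hpr : p = r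
    · subst hpr
      rw [if_pos (rfl : ((r : ℕ × ℕ)) = (i - 1, j - 1)), if_pos rfl, if_pos rfl, if_pos rfl,
        if_pos rfl, if_neg hrq]
      ring
    · rw [if_neg hpr, if_neg hpr, if_neg hpr, if_neg hpr]
      by_cases hpq : p = q
      · subst hpq
        have h1 : ¬((q : ℕ × ℕ) = (i - 1, j - 1)) := fun h => hqr (Subtype.ext h)
        rw [if_neg h1, if_pos (rfl : ((q : ℕ × ℕ)) = (i, j)), if_pos rfl]
        ring
      · have h1 : ¬((p : ℕ × ℕ) = (i - 1, j - 1)) := fun h => hpr (Subtype.ext h)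
        have h2 : ¬((p : ℕ × ℕ) = (i, j)) := fun h => hpq (Subtype.ext h)
        rw [if_neg h1, if_neg h2, if_neg hpq]
        ring
  rw [heq]
  exact ((((vp_logshear q b c hbq hcq 1).comp
      (vp_logshear r b c hbr hcr (-1))).comp
        (vp_coord r b hbr)).comp
          (vp_coord r c hcr)).comp (vp_neg r)

end LP

noncomputable def LlogRho (n i j : ℕ) (x : {p // p ∈ triFinset n} → ℝ) :
    {p // p ∈ triFinset n} → ℝ :=
  (List.range (min i j)).foldl (fun y k => Llog n (i - k) (j - k) y) x

noncomputable def LlogStage (n t : ℕ) (x : {p // p ∈ triFinset n} → ℝ) :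
    {p // p ∈ triFinset n} → ℝ :=
  (List.range t).foldl (fun y k => LlogRho n (t - k) (1 + k) y) x

noncomputable def LlogPNG (n : ℕ) (x : {p // p ∈ triFinset n} → ℝ) :
    {p // p ∈ triFinset n} → ℝ :=
  (List.range n).foldl (fun y t => LlogStage n (t + 1) y) x

lemma foldl_comm {n : ℕ} {α : Type*} (f : α → (ℕ → ℕ → ℝ) → (ℕ → ℕ → ℝ))
    (g : α → ({p // p ∈ triFinset n} → ℝ) → ({p // p ∈ triFinset n} → ℝ))
    (l : List α) (h : ∀ a ∈ l, ∀ x, f a (Efun n x) = Efun n (g a x)) :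
    ∀ x, l.foldl (fun Y a => f a Y) (Efun n x) = Efun n (l.foldl (fun y a => g a y) x) := by
  induction l with
  | nil => intro x; rfl
  | cons a l ih =>
      intro x
      simp only [List.foldl_cons]
      rw [h a List.mem_cons_self x]
      exact ih (fun b hb => h b (List.mem_cons_of_mem _ hb)) _

lemma rho_comm {n i j : ℕ} (hij : i + j ≤ n + 1) (x : {p // p ∈ triFinset n} → ℝ) :
    rhoMove i j (Efun n x) = Efun n (LlogRho n i j x) := by
  rw [rhoMove, LlogRho]
  exact foldl_comm (fun k Y => lmove (i - k) (j - k) Y)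
    (fun k y => Llog n (i - k) (j - k) y) _
    (fun k hk y => by
      rw [List.mem_range] at hk
      exact lmove_comm (by omega) (by omega) (by omega) y) x

lemma stage_comm {n t : ℕ} (ht : t ≤ n) (x : {p // p ∈ triFinset n} → ℝ) :
    pngStage t (Efun n x) = Efun n (LlogStage n t x) := by
  rw [pngStage, LlogStage]
  exact foldl_comm (fun k Y => rhoMove (t - k) (1 + k) Y)
    (fun k y => LlogRho n (t - k) (1 + k) y) _
    (fun k hk y => by
      rw [List.mem_range] at hk
      exact rho_comm (by omega) y) x

lemma png_comm {n : ℕ} (x : {p // p ∈ triFinset n} → ℝ) :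
    gPNG n (Efun n x) = Efun n (LlogPNG n x) := by
  rw [gPNG, LlogPNG]
  exact foldl_comm (fun t Y => pngStage (t + 1) Y)
    (fun t y => LlogStage n (t + 1) y) _
    (fun t ht y => by
      rw [List.mem_range] at ht
      exact stage_comm (by omega) y) x

lemma gPNGlog_eq (n : ℕ) : gPNGlog n = LlogPNG n := by
  funext x p
  have h0 : (fun i j => if h : (i, j) ∈ triFinset n then Real.exp (x ⟨(i, j), h⟩) else 1)
      = Efun n x := by
    funext a b
    rw [Efun, tget]
    by_cases hm : (a, b) ∈ triFinset n
    · rw [dif_pos hm, dif_pos hm]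
    · rw [dif_neg hm, dif_neg hm, Real.exp_zero]
  rw [gPNGlog, h0, png_comm]
  have hm : (p.1.1, p.1.2) ∈ triFinset n := by rw [Prod.mk.eta]; exact p.2
  show Real.log (Real.exp (tget n (LlogPNG n x) p.1.1 p.1.2)) = _
  rw [Real.log_exp, tget, dif_pos hm]

lemma vp_rho {n i j : ℕ} (hij : i + j ≤ n + 1) : VP (LlogRho n i j) := by
  have := VP.foldl (ι := {p // p ∈ triFinset n})
    (fun k y => Llog n (i - k) (j - k) y) (List.range (min i j))
    (fun k hk => by
      rw [List.mem_range] at hk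
      exact vp_llog (by omega) (by omega) (by omega))
  exact this

lemma vp_stage {n t : ℕ} (ht : t ≤ n) : VP (LlogStage n t) := by
  have := VP.foldl (ι := {p // p ∈ triFinset n})
    (fun k y => LlogRho n (t - k) (1 + k) y) (List.range t)
    (fun k hk => by
      rw [List.mem_range] at hk
      exact vp_rho (by omega))
  exact this

lemma vp_png (n : ℕ) : VP (LlogPNG n) := by
  have := VP.foldl (ι := {p // p ∈ triFinset n})
    (fun t y => LlogStage n (t + 1) y) (List.range n)
    (fun t ht => by
      rw [List.mem_range] at ht
      exact vp_stage (by omega))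
  exact this


/-- Geometric PNG is volume preserving in logarithmic variables:
the map `(log w_{ij}) ↦ (log h_{ij})` has Jacobian determinant `±1`. -/
theorem gPNG_volume_preserving (n : ℕ) (x : {p // p ∈ triFinset n} → ℝ) :
    |LinearMap.det (fderiv ℝ (gPNGlog n) x).toLinearMap| = 1 := by
  rw [gPNGlog_eq]
  exact (vp_png n).2 x
end

section
/- Let W = (w_{ij})_{1 ≤ i+j−1 ≤ n} be a positive triangular array and H = (h_{ij}) = gPNG(W). Then for every pair (p,q) with p+q = n+1 or p+q = n, one has Π_{r=0}^{p∧q−1} h_{p−r,q−r} = Π_{i≤p, j≤q} w_{ij}; i.e., the product of the entries of H along the north-west diagonal starting at (p,q) equals the product of all input entries in the rectangle [1,p]×[1,q]. -/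
namespace GPNGaux


noncomputable def DD (Y : ℕ → ℕ → ℝ) (p q : ℕ) : ℝ :=
  ∏ r ∈ Finset.range (min p q), Y (p - r) (q - r)

lemma DD_zero_left (Y : ℕ → ℕ → ℝ) (q : ℕ) : DD Y 0 q = 1 := by simp [DD]
lemma DD_zero_right (Y : ℕ → ℕ → ℝ) (p : ℕ) : DD Y p 0 = 1 := by simp [DD]

lemma foldl_range_induct {α : Type*} (f : ℕ → α → α) (P : ℕ → α → Prop) (x : α) :
    ∀ n, P 0 x → (∀ k < n, ∀ y, P k y → P (k + 1) (f k y)) →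
      P n ((List.range n).foldl (fun y k => f k y) x) := by
  intro n
  induction n with
  | zero => intro h _; simpa using h
  | succ n ih =>
    intro h0 hs
    rw [List.range_succ, List.foldl_append]
    simp only [List.foldl_cons, List.foldl_nil]
    exact hs n (Nat.lt_succ_self n) _ (ih h0 fun k hk => hs k (hk.trans (Nat.lt_succ_self n)))

lemma range_one' : List.range 1 = [0] := rfl

lemma lmove_one_one (X : ℕ → ℕ → ℝ) : lmove 1 1 X = X := by simp [lmove]

lemma lmove_row (j : ℕ) (hj : 2 ≤ j) (X : ℕ → ℕ → ℝ) :
    lmove 1 j X 1 j = X 1 (j - 1) * X 1 j := by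
  have h : ¬ (1 = 1 ∧ j = 1) := by omega
  have h2 : ¬ j = 1 := by omega
  simp [lmove, h, h2]

lemma lmove_col (i : ℕ) (hi : 2 ≤ i) (X : ℕ → ℕ → ℝ) :
    lmove i 1 X i 1 = X (i - 1) 1 * X i 1 := by
  have h : ¬ (i = 1 ∧ (1:ℕ) = 1) := by omega
  have h2 : ¬ i = 1 := by omega
  simp [lmove, h, h2]

lemma lmove_d (i j : ℕ) (hi : 2 ≤ i) (hj : 2 ≤ j) (X : ℕ → ℕ → ℝ) :
    lmove i j X i j = X i j * (X (i - 1) j + X i (j - 1)) := by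
  have h1 : ¬ (i = 1 ∧ j = 1) := by omega
  have h2 : ¬ i = 1 := by omega
  have h3 : ¬ j = 1 := by omega
  have h4 : ¬ (i = i - 1 ∧ j = j - 1) := by omega
  simp [lmove, h1, h2, h3, h4]

lemma lmove_a (i j : ℕ) (hi : 2 ≤ i) (hj : 2 ≤ j) (X : ℕ → ℕ → ℝ) :
    lmove i j X (i - 1) (j - 1)
      = X (i - 1) j * X i (j - 1) / (X (i - 1) (j - 1) * (X (i - 1) j + X i (j - 1))) := by
  have h1 : ¬ (i = 1 ∧ j = 1) := by omega
  have h2 : ¬ i = 1 := by omega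
  have h3 : ¬ j = 1 := by omega
  simp [lmove, h1, h2, h3]

lemma lmove_ne (i j p q : ℕ) (X : ℕ → ℕ → ℝ) (h1 : ¬ (p = i ∧ q = j))
    (h2 : ¬ (p = i - 1 ∧ q = j - 1)) : lmove i j X p q = X p q := by
  unfold lmove
  split_ifs with c1 c2 c3
  · rfl
  · simp only []
    rw [if_neg (by omega)]
  · simp only []
    rw [if_neg (by omega)]
  · simp only []
    rw [if_neg h2, if_neg h1]

lemma lmove_pos (N i j : ℕ) (hi : 1 ≤ i) (hj : 1 ≤ j) (hij : i + j ≤ N) (X : ℕ → ℕ → ℝ)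
    (hX : ∀ p q, 1 ≤ p → 1 ≤ q → p + q ≤ N → 0 < X p q) :
    ∀ p q, 1 ≤ p → 1 ≤ q → p + q ≤ N → 0 < lmove i j X p q := by
  intro p q hp hq hpq
  by_cases h1 : p = i ∧ q = j
  · obtain ⟨rfl, rfl⟩ := h1
    by_cases hi1 : p = 1
    · by_cases hj1 : q = 1
      · subst hi1; subst hj1; rw [lmove_one_one]; exact hX _ _ hp hq hpq
      · subst hi1
        rw [lmove_row q (by omega)]
        exact mul_pos (hX _ _ (by omega) (by omega) (by omega)) (hX _ _ hp hq hpq)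
    · by_cases hj1 : q = 1
      · subst hj1
        rw [lmove_col p (by omega)]
        exact mul_pos (hX _ _ (by omega) (by omega) (by omega)) (hX _ _ hp hq hpq)
      · rw [lmove_d p q (by omega) (by omega)]
        exact mul_pos (hX _ _ hp hq hpq)
          (add_pos (hX _ _ (by omega) (by omega) (by omega))
            (hX _ _ (by omega) (by omega) (by omega)))
  · by_cases h2 : p = i - 1 ∧ q = j - 1
    · obtain ⟨rfl, rfl⟩ := h2
      have hi2 : 2 ≤ i := by omega
      have hj2 : 2 ≤ j := by omega
      rw [lmove_a i j hi2 hj2]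
      have hb := hX (i-1) j (by omega) (by omega) (by omega)
      have hc := hX i (j-1) (by omega) (by omega) (by omega)
      have ha := hX (i-1) (j-1) (by omega) (by omega) (by omega)
      exact div_pos (mul_pos hb hc) (mul_pos ha (add_pos hb hc))
    · rw [lmove_ne i j p q X h1 h2]; exact hX _ _ hp hq hpq

lemma rho_untouched (i j p q : ℕ) (X : ℕ → ℕ → ℝ) (hp : 1 ≤ p) (hq : 1 ≤ q)
    (h : ∀ m, ¬ (p + m = i ∧ q + m = j)) :
    rhoMove i j X p q = X p q := by
  unfold rhoMove
  refine foldl_range_induct (fun k Y => lmove (i - k) (j - k) Y)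
    (fun _ Y => Y p q = X p q) X (min i j) rfl ?_
  intro k hk Y hY
  show lmove (i - k) (j - k) Y p q = X p q
  rw [lmove_ne _ _ _ _ Y ?_ ?_, hY]
  · rintro ⟨e1, e2⟩; exact h k (by omega)
  · rintro ⟨e1, e2⟩; exact h (k+1) (by omega)

lemma rho_pos (N i j : ℕ) (hi : 1 ≤ i) (hj : 1 ≤ j) (hij : i + j ≤ N) (X : ℕ → ℕ → ℝ)
    (hX : ∀ p q, 1 ≤ p → 1 ≤ q → p + q ≤ N → 0 < X p q) :
    ∀ p q, 1 ≤ p → 1 ≤ q → p + q ≤ N → 0 < rhoMove i j X p q := by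
  unfold rhoMove
  exact foldl_range_induct _ (fun _ Y => ∀ p q, 1 ≤ p → 1 ≤ q → p + q ≤ N → 0 < Y p q)
    X (min i j) hX
    (fun k hk Y hY => lmove_pos N (i - k) (j - k) (by omega) (by omega) (by omega) Y hY)




lemma rho_key (i j : ℕ) (hi : 1 ≤ i) (hj : 1 ≤ j) (X : ℕ → ℕ → ℝ)
    (pos : ∀ p q, 1 ≤ p → 1 ≤ q → p + q < i + j → 0 < X p q) :
    DD (rhoMove i j X) i j
      = X i j * DD X (i-1) j * DD X i (j-1) / DD X (i-1) (j-1) := by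
  by_cases hi1 : i = 1
  · subst hi1
    by_cases hj1 : j = 1
    · subst hj1
      have h : rhoMove 1 1 X = X := by
        unfold rhoMove; simp [range_one', lmove_one_one]
      rw [h]; simp [DD]
    · have hj2 : 2 ≤ j := by omega
      have hrho : rhoMove 1 j X = lmove 1 j X := by
        unfold rhoMove
        rw [show min 1 j = 1 by omega]
        simp [range_one']
      rw [hrho]
      have h1 : DD (lmove 1 j X) 1 j = lmove 1 j X 1 j := by
        simp [DD, show min 1 j = 1 by omega]
      rw [h1, lmove_row j hj2]
      rw [show (1:ℕ) - 1 = 0 from rfl, DD_zero_left, DD_zero_left]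
      have h2 : DD X 1 (j-1) = X 1 (j-1) := by
        simp [DD, show min 1 (j-1) = 1 by omega]
      rw [h2]; ring
  · by_cases hj1 : j = 1
    · subst hj1
      have hi2 : 2 ≤ i := by omega
      have hrho : rhoMove i 1 X = lmove i 1 X := by
        unfold rhoMove; rw [show min i 1 = 1 by omega]; simp [range_one']
      rw [hrho]
      have h1 : DD (lmove i 1 X) i 1 = lmove i 1 X i 1 := by
        simp [DD, show min i 1 = 1 by omega]
      rw [h1, lmove_col i hi2]
      rw [show (1:ℕ) - 1 = 0 from rfl, DD_zero_right, DD_zero_right]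
      have h2 : DD X (i-1) 1 = X (i-1) 1 := by
        simp [DD, show min (i-1) 1 = 1 by omega]
      rw [h2]; ring
    · -- main case : i, j ≥ 2
      have hi2 : 2 ≤ i := by omega
      have hj2 : 2 ≤ j := by omega
      set M := min i j with hM
      have hM2 : 2 ≤ M := by omega
      set F := (List.range (M-1)).foldl (fun Y kk => lmove (i-kk) (j-kk) Y) X with hF
      have key : (∏ m ∈ Finset.range ((M-1)+1), F (i-m) (j-m)
            = X i j * ∏ m ∈ Finset.range (M-1),
                (X (i-m-1) (j-m) * X (i-m) (j-m-1) / X (i-m-1) (j-m-1)))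
          ∧ (∀ p q, 1 ≤ p → 1 ≤ q → (∀ m, m ≤ M-1 → ¬(p+m = i ∧ q+m = j)) → F p q = X p q) := by
        rw [hF]
        refine foldl_range_induct (fun k Y => lmove (i-k) (j-k) Y)
          (fun k Y => (∏ m ∈ Finset.range (k+1), Y (i-m) (j-m)
            = X i j * ∏ m ∈ Finset.range k,
                (X (i-m-1) (j-m) * X (i-m) (j-m-1) / X (i-m-1) (j-m-1)))
          ∧ (∀ p q, 1 ≤ p → 1 ≤ q → (∀ m, m ≤ k → ¬(p+m = i ∧ q+m = j)) → Y p q = X p q))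
          X (M-1) ⟨by simp, fun p q _ _ _ => rfl⟩ ?_
        intro k hk Y hYP
        obtain ⟨hY1, hY2⟩ := hYP
        have hk2i : k + 2 ≤ i := by omega
        have hk2j : k + 2 ≤ j := by omega
        constructor
        · show ∏ m ∈ Finset.range (k+1+1), lmove (i-k) (j-k) Y (i-m) (j-m) = _
          have hb : Y (i-k-1) (j-k) = X (i-k-1) (j-k) :=
            hY2 _ _ (by omega) (by omega) (by intro m hm; rintro ⟨e1,e2⟩; omega)
          have hc : Y (i-k) (j-k-1) = X (i-k) (j-k-1) :=
            hY2 _ _ (by omega) (by omega) (by intro m hm; rintro ⟨e1,e2⟩; omega)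
          have ha : Y (i-k-1) (j-k-1) = X (i-k-1) (j-k-1) :=
            hY2 _ _ (by omega) (by omega) (by intro m hm; rintro ⟨e1,e2⟩; omega)
          rw [Finset.prod_range_succ, Finset.prod_range_succ]
          have e1 : ∀ m ∈ Finset.range k,
              lmove (i-k) (j-k) Y (i-m) (j-m) = Y (i-m) (j-m) := by
            intro m hm
            simp only [Finset.mem_range] at hm
            exact lmove_ne _ _ _ _ Y (by rintro ⟨f1,f2⟩; omega) (by rintro ⟨f1,f2⟩; omega)
          rw [Finset.prod_congr rfl e1]
          have e2 : lmove (i-k) (j-k) Y (i-k) (j-k)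
              = Y (i-k) (j-k) * (Y (i-k-1) (j-k) + Y (i-k) (j-k-1)) :=
            lmove_d (i-k) (j-k) (by omega) (by omega) Y
          have e3 : lmove (i-k) (j-k) Y (i-(k+1)) (j-(k+1))
              = Y (i-k-1) (j-k) * Y (i-k) (j-k-1)
                / (Y (i-k-1) (j-k-1) * (Y (i-k-1) (j-k) + Y (i-k) (j-k-1))) := by
            rw [show i - (k+1) = i - k - 1 by omega, show j - (k+1) = j - k - 1 by omega]
            exact lmove_a (i-k) (j-k) (by omega) (by omega) Y
          rw [e2, e3, hb, hc, ha]
          rw [Finset.prod_range_succ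
            (f := fun m => X (i-m-1) (j-m) * X (i-m) (j-m-1) / X (i-m-1) (j-m-1)) (n := k)]
          have hbpos : 0 < X (i-k-1) (j-k) := pos _ _ (by omega) (by omega) (by omega)
          have hcpos : 0 < X (i-k) (j-k-1) := pos _ _ (by omega) (by omega) (by omega)
          have hapos : 0 < X (i-k-1) (j-k-1) := pos _ _ (by omega) (by omega) (by omega)
          have expand : ∀ (P Yk b c a : ℝ), 0 < b → 0 < c → 0 < a →
              P * (Yk * (b + c)) * (b * c / (a * (b + c))) = (P * Yk) * (b * c / a) := by
            intro P Yk b c a hb' hc' ha'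
            have h1 : b + c ≠ 0 := by positivity
            have h2 : a ≠ 0 := by positivity
            field_simp
          rw [expand _ _ _ _ _ hbpos hcpos hapos,
            ← Finset.prod_range_succ (fun m => Y (i-m) (j-m)) k, hY1]
          ring
        · intro p q hp hq hm
          show lmove (i-k) (j-k) Y p q = X p q
          rw [lmove_ne _ _ _ _ Y ?_ ?_, hY2 p q hp hq (fun m hm' => hm m (by omega))]
          · rintro ⟨e1,e2⟩
            exact hm k (by omega) ⟨by omega, by omega⟩
          · rintro ⟨e1,e2⟩
            exact hm (k+1) (by omega) ⟨by omega, by omega⟩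
      -- split off the last move
      have hsplit : rhoMove i j X = lmove (i-(M-1)) (j-(M-1)) F := by
        unfold rhoMove
        rw [show min i j = (M-1) + 1 by omega, List.range_succ, List.foldl_append]
        simp only [List.foldl_cons, List.foldl_nil]
        rfl
      have hDD : DD (rhoMove i j X) i j
          = ∏ m ∈ Finset.range M, lmove (i-(M-1)) (j-(M-1)) F (i-m) (j-m) := by
        rw [hsplit, DD, ← hM]
      -- conversions for the three rectangle diagonals
      have cb : DD X (i-1) j = ∏ m ∈ Finset.range (min (i-1) j), X (i-m-1) (j-m) :=
        Finset.prod_congr rfl fun m _ => by rw [show i-1-m = i-m-1 by omega]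
      have cc : DD X i (j-1) = ∏ m ∈ Finset.range (min i (j-1)), X (i-m) (j-m-1) :=
        Finset.prod_congr rfl fun m _ => by rw [show j-1-m = j-m-1 by omega]
      have ca : DD X (i-1) (j-1) = ∏ m ∈ Finset.range (min (i-1) (j-1)), X (i-m-1) (j-m-1) :=
        Finset.prod_congr rfl fun m _ => by
          rw [show i-1-m = i-m-1 by omega, show j-1-m = j-m-1 by omega]
      have hprod : ∏ m ∈ Finset.range (M-1),
            (X (i-m-1) (j-m) * X (i-m) (j-m-1) / X (i-m-1) (j-m-1))
          = (∏ m ∈ Finset.range (M-1), X (i-m-1) (j-m))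
            * (∏ m ∈ Finset.range (M-1), X (i-m) (j-m-1))
            / (∏ m ∈ Finset.range (M-1), X (i-m-1) (j-m-1)) := by
        rw [Finset.prod_div_distrib, Finset.prod_mul_distrib]
      have hpeel : ∀ f : ℕ → ℝ,
          ∏ m ∈ Finset.range M, f m = (∏ m ∈ Finset.range (M-1), f m) * f (M-1) := by
        intro f
        conv_lhs => rw [show M = (M-1)+1 by omega]
        rw [Finset.prod_range_succ]
      rcases lt_trichotomy i j with hlt | heq | hgt
      · -- i < j : boundary factor X 1 (j-i)
        have hMi : M = i := by omega
        have hu : i - (M-1) = 1 := by omega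
        have hv : j - (M-1) = j - i + 1 := by omega
        have hvw : 2 ≤ j - i + 1 := by omega
        rw [hDD, hu, hv]
        rw [hpeel (fun m => lmove 1 (j-i+1) F (i-m) (j-m))]
        have e1 : ∀ m ∈ Finset.range (M-1),
            lmove 1 (j-i+1) F (i-m) (j-m) = F (i-m) (j-m) := by
          intro m hm
          simp only [Finset.mem_range] at hm
          exact lmove_ne _ _ _ _ F (by rintro ⟨f1,f2⟩; omega) (by rintro ⟨f1,f2⟩; omega)
        rw [Finset.prod_congr rfl e1]
        rw [show i - ((M-1)) = 1 by omega, show j - ((M-1)) = j - i + 1 by omega]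
        rw [lmove_row (j-i+1) hvw F, show j - i + 1 - 1 = j - i by omega]
        have hbf : F 1 (j-i) = X 1 (j-i) :=
          key.2 1 (j-i) le_rfl (by omega) (by intro m hm; rintro ⟨e1',e2'⟩; omega)
        rw [hbf]
        have hkey1 : (∏ m ∈ Finset.range (M-1), F (i-m) (j-m)) * F 1 (j-i+1)
            = X i j * ∏ m ∈ Finset.range (M-1),
                (X (i-m-1) (j-m) * X (i-m) (j-m-1) / X (i-m-1) (j-m-1)) := by
          have := key.1
          rw [Finset.prod_range_succ] at this
          rw [show i - (M-1) = 1 by omega, show j - (M-1) = j - i + 1 by omega] at this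
          exact this
        calc (∏ m ∈ Finset.range (M-1), F (i-m) (j-m)) * (X 1 (j-i) * F 1 (j-i+1))
            = ((∏ m ∈ Finset.range (M-1), F (i-m) (j-m)) * F 1 (j-i+1)) * X 1 (j-i) := by
              ring
          _ = (X i j * ∏ m ∈ Finset.range (M-1),
                (X (i-m-1) (j-m) * X (i-m) (j-m-1) / X (i-m-1) (j-m-1))) * X 1 (j-i) := by
              rw [hkey1]
          _ = X i j * DD X (i-1) j * DD X i (j-1) / DD X (i-1) (j-1) := by
              rw [cb, cc, ca, hprod]
              rw [show min (i-1) j = M - 1 by omega, show min (i-1) (j-1) = M - 1 by omega]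
              rw [show min i (j-1) = M by omega]
              rw [hpeel (fun m => X (i-m) (j-m-1))]
              rw [show i - (M-1) = 1 by omega, show j - (M-1) - 1 = j - i by omega]
              ring
      · -- i = j
        subst heq
        have hMi : M = i := by omega
        have hu : i - (M-1) = 1 := by omega
        rw [hDD, hu, lmove_one_one]
        have hkey1 := key.1
        rw [show (M-1)+1 = M by omega] at hkey1
        rw [hkey1, cb, cc, ca, hprod]
        rw [show min (i-1) i = M - 1 by omega, show min i (i-1) = M - 1 by omega,
          show min (i-1) (i-1) = M - 1 by omega]
        ring
      · -- i > j : boundary factor X (i-j) 1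
        have hMj : M = j := by omega
        have hu : i - (M-1) = i - j + 1 := by omega
        have hv : j - (M-1) = 1 := by omega
        have huw : 2 ≤ i - j + 1 := by omega
        rw [hDD, hu, hv]
        rw [hpeel (fun m => lmove (i-j+1) 1 F (i-m) (j-m))]
        have e1 : ∀ m ∈ Finset.range (M-1),
            lmove (i-j+1) 1 F (i-m) (j-m) = F (i-m) (j-m) := by
          intro m hm
          simp only [Finset.mem_range] at hm
          exact lmove_ne _ _ _ _ F (by rintro ⟨f1,f2⟩; omega) (by rintro ⟨f1,f2⟩; omega)
        rw [Finset.prod_congr rfl e1]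
        rw [show i - ((M-1)) = i - j + 1 by omega, show j - ((M-1)) = 1 by omega]
        rw [lmove_col (i-j+1) huw F, show i - j + 1 - 1 = i - j by omega]
        have hbf : F (i-j) 1 = X (i-j) 1 :=
          key.2 (i-j) 1 (by omega) le_rfl (by intro m hm; rintro ⟨e1',e2'⟩; omega)
        rw [hbf]
        have hkey1 : (∏ m ∈ Finset.range (M-1), F (i-m) (j-m)) * F (i-j+1) 1
            = X i j * ∏ m ∈ Finset.range (M-1),
                (X (i-m-1) (j-m) * X (i-m) (j-m-1) / X (i-m-1) (j-m-1)) := by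
          have := key.1
          rw [Finset.prod_range_succ] at this
          rw [show i - (M-1) = i - j + 1 by omega, show j - (M-1) = 1 by omega] at this
          exact this
        calc (∏ m ∈ Finset.range (M-1), F (i-m) (j-m)) * (X (i-j) 1 * F (i-j+1) 1)
            = ((∏ m ∈ Finset.range (M-1), F (i-m) (j-m)) * F (i-j+1) 1) * X (i-j) 1 := by
              ring
          _ = (X i j * ∏ m ∈ Finset.range (M-1),
                (X (i-m-1) (j-m) * X (i-m) (j-m-1) / X (i-m-1) (j-m-1))) * X (i-j) 1 := by
              rw [hkey1]
          _ = X i j * DD X (i-1) j * DD X i (j-1) / DD X (i-1) (j-1) := by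
              rw [cb, cc, ca, hprod]
              rw [show min i (j-1) = M - 1 by omega, show min (i-1) (j-1) = M - 1 by omega]
              rw [show min (i-1) j = M by omega]
              rw [hpeel (fun m => X (i-m-1) (j-m))]
              rw [show i - (M-1) - 1 = i - j by omega, show j - (M-1) = 1 by omega]
              ring




lemma stage_untouched (s : ℕ) (X : ℕ → ℕ → ℝ) (p q : ℕ) (hp : 1 ≤ p) (hq : 1 ≤ q)
    (h : ∀ m, p + q + 2*m ≠ s + 1) : pngStage s X p q = X p q := by
  unfold pngStage
  refine foldl_range_induct (fun k Y => rhoMove (s - k) (1 + k) Y)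
    (fun _ Y => Y p q = X p q) X s rfl ?_
  intro k hk Y hY
  show rhoMove (s - k) (1 + k) Y p q = X p q
  rw [rho_untouched _ _ _ _ Y hp hq ?_, hY]
  intro m
  rintro ⟨e1, e2⟩
  exact h m (by omega)

lemma stage_pos (N s : ℕ) (hs : s + 1 ≤ N) (X : ℕ → ℕ → ℝ)
    (hX : ∀ p q, 1 ≤ p → 1 ≤ q → p + q ≤ N → 0 < X p q) :
    ∀ p q, 1 ≤ p → 1 ≤ q → p + q ≤ N → 0 < pngStage s X p q := by
  unfold pngStage
  exact foldl_range_induct _ (fun _ Y => ∀ p q, 1 ≤ p → 1 ≤ q → p + q ≤ N → 0 < Y p q)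
    X s hX
    (fun k hk Y hY => rho_pos N (s - k) (1 + k) (by omega) (by omega) (by omega) Y hY)

lemma stage_diag (s : ℕ) (X : ℕ → ℕ → ℝ) (p q : ℕ) (hp : 1 ≤ p) (hq : 1 ≤ q)
    (hpq : p + q = s) : DD (pngStage s X) p q = DD X p q := by
  refine Finset.prod_congr rfl ?_
  intro r hr
  simp only [Finset.mem_range] at hr
  exact stage_untouched s X (p - r) (q - r) (by omega) (by omega) (by intro m; omega)

lemma foldl_range_split {α : Type*} (f : ℕ → α → α) (x : α) (a b : ℕ) :
    (List.range (a + 1 + b)).foldl (fun y k => f k y) x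
      = (List.range b).foldl (fun y k' => f (a + 1 + k') y)
          (f a ((List.range a).foldl (fun y k => f k y) x)) := by
  rw [List.range_add, List.foldl_append, List.range_succ, List.foldl_append, List.foldl_map]
  simp only [List.foldl_cons, List.foldl_nil]

lemma stage_key (N s : ℕ) (hs : s + 1 ≤ N) (X : ℕ → ℕ → ℝ)
    (hX : ∀ p q, 1 ≤ p → 1 ≤ q → p + q ≤ N → 0 < X p q)
    (i j : ℕ) (hi : 1 ≤ i) (hj : 1 ≤ j) (hij : i + j = s + 1) :
    DD (pngStage s X) i j
      = X i j * DD X (i-1) j * DD X i (j-1) / DD X (i-1) (j-1) := by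
  have hjs : j ≤ s := by omega
  set Z := (List.range (j-1)).foldl (fun Y k => rhoMove (s - k) (1 + k) Y) X with hZ
  have hZpos : ∀ p q, 1 ≤ p → 1 ≤ q → p + q ≤ N → 0 < Z p q := by
    rw [hZ]
    exact foldl_range_induct _ (fun _ Y => ∀ p q, 1 ≤ p → 1 ≤ q → p + q ≤ N → 0 < Y p q)
      X (j-1) hX
      (fun k hk Y hY => rho_pos N (s - k) (1 + k) (by omega) (by omega) (by omega) Y hY)
  have hZeq : ∀ p q, 1 ≤ p → 1 ≤ q →
      (∀ k, k < j - 1 → ∀ m, ¬(p + m = s - k ∧ q + m = 1 + k)) → Z p q = X p q := by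
    intro p q hp hq hcond
    rw [hZ]
    refine foldl_range_induct (fun k Y => rhoMove (s - k) (1 + k) Y)
      (fun _ Y => Y p q = X p q) X (j-1) rfl ?_
    intro k hk Y hY
    show rhoMove (s - k) (1 + k) Y p q = X p q
    rw [rho_untouched _ _ _ _ Y hp hq (hcond k hk), hY]
  -- decompose the stage fold
  have hdec : pngStage s X
      = (List.range (s - j)).foldl
          (fun Y k' => rhoMove (s - (j - 1 + 1 + k')) (1 + (j - 1 + 1 + k')) Y)
          (rhoMove i j Z) := by
    unfold pngStage
    have h0 := foldl_range_split (fun k Y => rhoMove (s - k) (1 + k) Y) X (j-1) (s-j)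
    rw [show j - 1 + 1 + (s - j) = s by omega] at h0
    rw [h0, show s - (j-1) = i by omega, show 1 + (j-1) = j by omega, ← hZ]
  rw [hdec]
  have hafter : ∀ r, r < min i j →
      ((List.range (s - j)).foldl
          (fun Y k' => rhoMove (s - (j - 1 + 1 + k')) (1 + (j - 1 + 1 + k')) Y)
          (rhoMove i j Z)) (i - r) (j - r) = rhoMove i j Z (i - r) (j - r) := by
    have := foldl_range_induct (fun k' Y => rhoMove (s - (j - 1 + 1 + k')) (1 + (j - 1 + 1 + k')) Y)
      (fun _ Y => ∀ r, r < min i j → Y (i - r) (j - r) = rhoMove i j Z (i - r) (j - r))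
      (rhoMove i j Z) (s - j) (fun _ _ => rfl) ?_
    · exact this
    · intro k hk Y hY r hr
      show rhoMove (s - (j - 1 + 1 + k)) (1 + (j - 1 + 1 + k)) Y (i - r) (j - r) = _
      rw [rho_untouched _ _ _ _ Y (by omega) (by omega) ?_, hY r hr]
      intro m
      rintro ⟨e1, e2⟩
      omega
  have hDDeq : DD ((List.range (s - j)).foldl
          (fun Y k' => rhoMove (s - (j - 1 + 1 + k')) (1 + (j - 1 + 1 + k')) Y)
          (rhoMove i j Z)) i j = DD (rhoMove i j Z) i j := by
    refine Finset.prod_congr rfl ?_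
    intro r hr
    simp only [Finset.mem_range] at hr
    exact hafter r hr
  rw [hDDeq, rho_key i j hi hj Z (fun p q hp hq hlt => hZpos p q hp hq (by omega))]
  have hZij : Z i j = X i j := by
    refine hZeq i j hi hj ?_
    intro k hk m
    rintro ⟨e1, e2⟩
    omega
  have hDb : DD Z (i-1) j = DD X (i-1) j := by
    refine Finset.prod_congr rfl ?_
    intro r hr
    simp only [Finset.mem_range, lt_min_iff] at hr
    refine hZeq _ _ (by omega) (by omega) ?_
    intro k hk m
    rintro ⟨e1, e2⟩
    omega
  have hDc : DD Z i (j-1) = DD X i (j-1) := by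
    refine Finset.prod_congr rfl ?_
    intro r hr
    simp only [Finset.mem_range, lt_min_iff] at hr
    refine hZeq _ _ (by omega) (by omega) ?_
    intro k hk m
    rintro ⟨e1, e2⟩
    omega
  have hDa : DD Z (i-1) (j-1) = DD X (i-1) (j-1) := by
    refine Finset.prod_congr rfl ?_
    intro r hr
    simp only [Finset.mem_range, lt_min_iff] at hr
    refine hZeq _ _ (by omega) (by omega) ?_
    intro k hk m
    rintro ⟨e1, e2⟩
    omega
  rw [hZij, hDb, hDc, hDa]




noncomputable def RR (W : ℕ → ℕ → ℝ) (p q : ℕ) : ℝ :=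
  ∏ ij ∈ Finset.Icc 1 p ×ˢ Finset.Icc 1 q, W ij.1 ij.2

lemma RR_eq (W : ℕ → ℕ → ℝ) (p q : ℕ) :
    RR W p q = ∏ x ∈ Finset.Icc 1 p, ∏ y ∈ Finset.Icc 1 q, W x y := by
  rw [RR, Finset.prod_product]

lemma RR_zero_left (W : ℕ → ℕ → ℝ) (q : ℕ) : RR W 0 q = 1 := by
  rw [RR_eq]; simp

lemma RR_zero_right (W : ℕ → ℕ → ℝ) (p : ℕ) : RR W p 0 = 1 := by
  rw [RR_eq]; simp

lemma RR_pos (W : ℕ → ℕ → ℝ) (p q : ℕ)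
    (h : ∀ a b, 1 ≤ a → a ≤ p → 1 ≤ b → b ≤ q → 0 < W a b) : 0 < RR W p q := by
  rw [RR_eq]
  refine Finset.prod_pos ?_
  intro x hx
  simp only [Finset.mem_Icc] at hx
  refine Finset.prod_pos ?_
  intro y hy
  simp only [Finset.mem_Icc] at hy
  exact h x y hx.1 hx.2 hy.1 hy.2

lemma RR_rec (W : ℕ → ℕ → ℝ) (p q : ℕ) (hp : 1 ≤ p) (hq : 1 ≤ q)
    (hpos : ∀ a b, 1 ≤ a → a ≤ p → 1 ≤ b → b ≤ q → 0 < W a b) :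
    RR W p q = W p q * RR W (p-1) q * RR W p (q-1) / RR W (p-1) (q-1) := by
  obtain ⟨p', rfl⟩ : ∃ p', p = p' + 1 := ⟨p - 1, by omega⟩
  obtain ⟨q', rfl⟩ : ∃ q', q = q' + 1 := ⟨q - 1, by omega⟩
  rw [show p' + 1 - 1 = p' from rfl, show q' + 1 - 1 = q' from rfl]
  have e1 : RR W (p'+1) (q'+1)
      = RR W p' (q'+1) * ((∏ y ∈ Finset.Icc 1 q', W (p'+1) y) * W (p'+1) (q'+1)) := by
    rw [RR_eq, Finset.prod_Icc_succ_top (by omega), ← RR_eq,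
      Finset.prod_Icc_succ_top (by omega)]
  have e2 : RR W (p'+1) q' = RR W p' q' * ∏ y ∈ Finset.Icc 1 q', W (p'+1) y := by
    rw [RR_eq, Finset.prod_Icc_succ_top (by omega), ← RR_eq]
  have h0 : RR W p' q' ≠ 0 := by
    refine ne_of_gt (RR_pos W p' q' ?_)
    intro a b h1 h2 h3 h4
    exact hpos a b h1 (by omega) h3 (by omega)
  rw [e1, e2]
  field_simp

lemma gPNG_succ (t : ℕ) (W : ℕ → ℕ → ℝ) : gPNG (t+1) W = pngStage (t+1) (gPNG t W) := by
  unfold gPNG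
  rw [List.range_succ, List.foldl_append]
  simp only [List.foldl_cons, List.foldl_nil]

lemma main_inv (n : ℕ) (W : ℕ → ℕ → ℝ)
    (hW : ∀ i j, 1 ≤ i → 1 ≤ j → i + j ≤ n + 1 → 0 < W i j) :
    ∀ t, t ≤ n →
      (∀ p q, 1 ≤ p → 1 ≤ q → p + q ≤ n + 1 → 0 < gPNG t W p q) ∧
      (∀ p q, 1 ≤ p → 1 ≤ q → t + 2 ≤ p + q → p + q ≤ n + 1 → gPNG t W p q = W p q) ∧
      (∀ p q, 1 ≤ p → 1 ≤ q → (p + q = t + 1 ∨ p + q = t) → DD (gPNG t W) p q = RR W p q) := by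
  intro t
  induction t with
  | zero =>
    intro _
    refine ⟨hW, fun p q _ _ _ _ => rfl, ?_⟩
    intro p q hp hq hpq
    omega
  | succ t ih =>
    intro ht
    obtain ⟨ih1, ih2, ih3⟩ := ih (by omega)
    have hstage : gPNG (t+1) W = pngStage (t+1) (gPNG t W) := gPNG_succ t W
    have hpos' : ∀ p q, 1 ≤ p → 1 ≤ q → p + q ≤ n + 1 → 0 < gPNG (t+1) W p q := by
      rw [hstage]
      exact stage_pos (n+1) (t+1) (by omega) _ ih1
    refine ⟨hpos', ?_, ?_⟩
    · intro p q hp hq h1 h2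
      rw [hstage, stage_untouched (t+1) _ p q hp hq (by intro m; omega)]
      exact ih2 p q hp hq (by omega) h2
    · intro p q hp hq hcase
      rcases hcase with hcase | hcase
      · -- p + q = t + 2 : use stage_key
        rw [hstage, stage_key (n+1) (t+1) (by omega) _ ih1 p q hp hq (by omega)]
        have hGW : gPNG t W p q = W p q := ih2 p q hp hq (by omega) (by omega)
        have eb : DD (gPNG t W) (p-1) q = RR W (p-1) q := by
          by_cases hp1 : p = 1
          · subst hp1; rw [show (1:ℕ) - 1 = 0 from rfl, DD_zero_left, RR_zero_left]
          · exact ih3 (p-1) q (by omega) hq (Or.inl (by omega))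
        have ec : DD (gPNG t W) p (q-1) = RR W p (q-1) := by
          by_cases hq1 : q = 1
          · subst hq1; rw [show (1:ℕ) - 1 = 0 from rfl, DD_zero_right, RR_zero_right]
          · exact ih3 p (q-1) hp (by omega) (Or.inl (by omega))
        have ea : DD (gPNG t W) (p-1) (q-1) = RR W (p-1) (q-1) := by
          by_cases hp1 : p = 1
          · subst hp1; rw [show (1:ℕ) - 1 = 0 from rfl, DD_zero_left, RR_zero_left]
          · by_cases hq1 : q = 1
            · subst hq1; rw [show (1:ℕ) - 1 = 0 from rfl, DD_zero_right, RR_zero_right]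
            · exact ih3 (p-1) (q-1) (by omega) (by omega) (Or.inr (by omega))
        rw [hGW, eb, ec, ea]
        rw [RR_rec W p q hp hq (fun a b h1 h2 h3 h4 => hW a b h1 h3 (by omega))]
      · -- p + q = t + 1 : untouched by the stage
        rw [hstage, stage_diag (t+1) _ p q hp hq (by omega)]
        exact ih3 p q hp hq (Or.inl (by omega))


end GPNGaux

/-- Type preservation for geometric PNG: for a positive triangular array
`W = (w_{ij} : i+j-1 ≤ n)` and `H = gPNG(W)`, for every `(p,q)` with
`p + q = n + 1` or `p + q = n`, the product of the entries of `H` along the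
north-west diagonal starting at `(p,q)` equals the product of all input entries
in the rectangle `[1,p] × [1,q]`. -/
theorem gPNG_type (n p q : ℕ) (hp : 1 ≤ p) (hq : 1 ≤ q)
    (hpq : p + q = n + 1 ∨ p + q = n) (W : ℕ → ℕ → ℝ)
    (hW : ∀ i j, 1 ≤ i → 1 ≤ j → i + j - 1 ≤ n → 0 < W i j) :
    ∏ r ∈ Finset.range (min p q), gPNG n W (p - r) (q - r)
      = ∏ ij ∈ Finset.Icc 1 p ×ˢ Finset.Icc 1 q, W ij.1 ij.2 := by
  have hW' : ∀ i j, 1 ≤ i → 1 ≤ j → i + j ≤ n + 1 → 0 < W i j :=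
    fun i j h1 h2 h3 => hW i j h1 h2 (by omega)
  exact (GPNGaux.main_inv n W hW' n le_rfl).2.2 p q hp hq hpq
end

section
/- For sequences of complex numbers (w_i), (v_i), (𝗐_i), (𝗏_i) and γ > 0 with Re(w_i), Re(𝗐_i), Re(v_i), Re(𝗏_i) < γ/2, Re(w_i − v_j) > 0 and Re(𝗐_i − 𝗏_j) > 0 for all i,j, the following identity holds: det(1/(w_k − v_ℓ))_{n×n} · det(1/(𝗐_k − 𝗏_ℓ))_{m×m} · Π_{k=1}^n Π_{ℓ=1}^m [(γ−𝗐_ℓ−v_k)(γ−𝗏_ℓ−w_k)] / [(γ−𝗐_ℓ−w_k)(γ−𝗏_ℓ−v_k)] = ∫_{(0,∞)^{n+m}} det M(x) dx_1⋯dx_{n+m}, where M(x) is the (n+m)×(n+m) block matrix with blocks (e^{−x_j(w_i−v_j)})_{n×n}, (−e^{−x_{j+n}(γ−w_i−𝗐_j)})_{n×m}, (e^{−x_j(γ−𝗏_i−v_j)})_{m×n}, (e^{−x_{j+n}(𝗐_j−w_i)})_{m×m}. -/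
open MeasureTheory Set Finset


lemma integrableOn_cexp_neg_mul {a : ℂ} (ha : 0 < a.re) :
    IntegrableOn (fun t : ℝ => Complex.exp (-(t : ℂ) * a)) (Set.Ioi 0) := by
  have hc : Continuous fun t : ℝ => Complex.exp (-(t : ℂ) * a) := by
    exact ((Complex.continuous_ofReal.neg).mul continuous_const).cexp
  refine (exp_neg_integrableOn_Ioi 0 ha).mono' hc.aestronglyMeasurable ?_
  filter_upwards with t
  simp [Complex.norm_exp, mul_comm]

lemma integral_cexp_neg_mul {a : ℂ} (ha : 0 < a.re) :
    ∫ t in Set.Ioi (0:ℝ), Complex.exp (-(t : ℂ) * a) = a⁻¹ := by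
  have ha0 : a ≠ 0 := by
    intro h; rw [h] at ha; simp at ha
  have hderiv : ∀ t ∈ Set.Ici (0:ℝ),
      HasDerivAt (fun t : ℝ => -a⁻¹ * Complex.exp (-(t : ℂ) * a))
        (Complex.exp (-(t : ℂ) * a)) t := by
    intro t _
    have h1 : HasDerivAt (fun t : ℝ => -(t : ℂ) * a) (-a) t := by
      simpa using ((Complex.ofRealCLM.hasDerivAt (x := t)).neg.mul_const a)
    have h2 := h1.cexp
    have h3 := h2.const_mul (-a⁻¹)
    convert h3 using 1
    case e'_4 => rfl
    linear_combination (-(Complex.exp (-(t:ℂ) * a))) * inv_mul_cancel₀ ha0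
  have htend : Filter.Tendsto (fun t : ℝ => -a⁻¹ * Complex.exp (-(t : ℂ) * a))
      Filter.atTop (nhds 0) := by
    rw [tendsto_zero_iff_norm_tendsto_zero]
    have : Filter.Tendsto (fun t : ℝ => ‖(-a⁻¹ : ℂ)‖ * Real.exp (-a.re * t))
        Filter.atTop (nhds (‖(-a⁻¹ : ℂ)‖ * 0)) := by
      refine Filter.Tendsto.const_mul _ ?_
      exact Real.tendsto_exp_atBot.comp
        (Filter.tendsto_id.const_mul_atTop_of_neg (neg_neg_iff_pos.2 ha))
    simpa [norm_mul, Complex.norm_exp, mul_comm] using this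
  have := integral_Ioi_of_hasDerivAt_of_tendsto' hderiv
    (integrableOn_cexp_neg_mul ha) htend
  simpa using this


lemma integral_det_exp {ι : Type*} [Fintype ι] [DecidableEq ι] (g : ι → ι → ℝ → ℂ)
    (hg : ∀ i j, IntegrableOn (g i j) (Set.Ioi 0)) :
    (∫ x : ι → ℝ in Set.univ.pi (fun _ => Set.Ioi (0:ℝ)),
        (Matrix.of fun i j => g i j (x j)).det)
      = (Matrix.of fun i j => ∫ t in Set.Ioi (0:ℝ), g i j t).det := by
  set G : ι → ι → ℝ → ℂ := fun i j => (Set.Ioi (0:ℝ)).indicator (g i j) with hG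
  have hGint : ∀ i j, Integrable (G i j) := fun i j =>
    (integrable_indicator_iff measurableSet_Ioi).2 (hg i j)
  have hset : MeasurableSet (Set.univ.pi (fun _ : ι => Set.Ioi (0:ℝ))) :=
    MeasurableSet.univ_pi fun _ => measurableSet_Ioi
  rw [← integral_indicator hset]
  have h1 : (Set.univ.pi (fun _ : ι => Set.Ioi (0:ℝ))).indicator
      (fun x : ι → ℝ => (Matrix.of fun i j => g i j (x j)).det)
      = fun x : ι → ℝ => ∑ σ : Equiv.Perm ι,
          (Equiv.Perm.sign σ : ℂ) * ∏ j, G (σ j) j (x j) := by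
    funext x
    by_cases hx : x ∈ Set.univ.pi (fun _ : ι => Set.Ioi (0:ℝ))
    · rw [Set.indicator_of_mem hx, Matrix.det_apply]
      refine Finset.sum_congr rfl fun σ _ => ?_
      have : ∀ j : ι, G (σ j) j (x j) = g (σ j) j (x j) := fun j =>
        Set.indicator_of_mem (hx j trivial) _
      simp only [this, Matrix.of_apply, Units.smul_def, zsmul_eq_mul]
    · rw [Set.indicator_of_notMem hx]
      symm
      refine Finset.sum_eq_zero fun σ _ => ?_
      rw [Set.mem_univ_pi] at hx
      push_neg at hx
      obtain ⟨j, hj⟩ := hx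
      rw [Finset.prod_eq_zero (Finset.mem_univ j)
        (Set.indicator_of_notMem hj _), mul_zero]
  rw [h1, integral_finset_sum]
  · have h2 : ∀ σ : Equiv.Perm ι,
        (∫ x : ι → ℝ, (Equiv.Perm.sign σ : ℂ) * ∏ j, G (σ j) j (x j))
          = (Equiv.Perm.sign σ : ℂ) * ∏ j, ∫ t in Set.Ioi (0:ℝ), g (σ j) j t := by
      intro σ
      rw [integral_const_mul]
      congr 1
      rw [MeasureTheory.integral_fintype_prod_volume_eq_prod (fun j => G (σ j) j)]
      exact Finset.prod_congr rfl fun j _ =>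
        (integral_indicator measurableSet_Ioi)
    simp only [h2]
    rw [Matrix.det_apply]
    refine Finset.sum_congr rfl fun σ _ => ?_
    simp only [Matrix.of_apply, Units.smul_def, zsmul_eq_mul]
  · intro σ _
    exact (MeasureTheory.Integrable.fintype_prod (fun j => hGint (σ j) j)).const_mul _


lemma inv_sub_inv_mul {x y : ℂ} (hx : x ≠ 0) (hy : y ≠ 0) :
    x⁻¹ - y⁻¹ = (y - x) * (y⁻¹ * x⁻¹) := by
  rw [inv_sub_inv hx hy, div_eq_mul_inv, mul_inv]
  ring

lemma cauchy_det : ∀ (k : ℕ) (a b : ℕ → ℂ),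
    (∀ i < k, ∀ j < k, a i - b j ≠ 0) →
    (Matrix.of fun i j : Fin k => (a i - b j)⁻¹).det
      = (∏ j ∈ Finset.range k, ∏ i ∈ Finset.range j, ((a j - a i) * (b i - b j))) /
        ∏ i ∈ Finset.range k, ∏ j ∈ Finset.range k, (a i - b j) := by
  intro k
  induction k with
  | zero => intro a b hab; simp
  | succ k IH =>
    intro a b hab
    -- nonzeroness facts
    have hne : ∀ i < k + 1, ∀ j < k + 1, a i - b j ≠ 0 := hab
    have hk1 : k < k + 1 := Nat.lt_succ_self k
    have hc : a k - b k ≠ 0 := hne k hk1 k hk1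
    have hP : (∏ j ∈ range k, (a k - b j)) ≠ 0 :=
      Finset.prod_ne_zero_iff.mpr fun j hj =>
        hne k hk1 j (Nat.lt_succ_of_lt (mem_range.mp hj))
    have hQ : (∏ i ∈ range k, (a i - b k)) ≠ 0 :=
      Finset.prod_ne_zero_iff.mpr fun i hi =>
        hne i (Nat.lt_succ_of_lt (mem_range.mp hi)) k hk1
    have hDd : (∏ i ∈ range k, ∏ j ∈ range k, (a i - b j)) ≠ 0 :=
      Finset.prod_ne_zero_iff.mpr fun i hi => Finset.prod_ne_zero_iff.mpr fun j hj =>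
        hne i (Nat.lt_succ_of_lt (mem_range.mp hi)) j (Nat.lt_succ_of_lt (mem_range.mp hj))
    set A : Matrix (Fin (k+1)) (Fin (k+1)) ℂ :=
      Matrix.of fun i j : Fin (k+1) => (a i - b j)⁻¹ with hA
    set C : Matrix (Fin (k+1)) (Fin (k+1)) ℂ :=
      Matrix.of fun i j : Fin (k+1) =>
        if i = Fin.last k then 1 else (a i - b j)⁻¹ with hC
    set B : Matrix (Fin (k+1)) (Fin (k+1)) ℂ :=
      Matrix.of fun i j : Fin (k+1) =>
        if i = Fin.last k then (a i - b j)⁻¹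
        else (a i - b j)⁻¹ - (a k - b j)⁻¹ with hB
    set D : Matrix (Fin (k+1)) (Fin (k+1)) ℂ :=
      Matrix.of fun i j : Fin (k+1) =>
        if j = Fin.last k then C i j else C i j - C i (Fin.last k) with hD
    -- step 1 : det A = det B
    have h1 : A.det = B.det := by
      refine Matrix.det_eq_of_forall_row_eq_smul_add_const
        (fun i => if i = Fin.last k then 0 else 1) (Fin.last k) (if_pos rfl) ?_
      intro i j
      by_cases hi : i = Fin.last k
      · simp [hA, hB, hi]
      · simp only [hA, hB, Matrix.of_apply, Fin.val_last]
        simp only [if_neg hi, if_true]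
        ring
    -- step 2 : det B in terms of det C
    have h2 : B.det = (∏ j : Fin (k+1), (a k - b (j:ℕ))⁻¹) *
        ((∏ i : Fin (k+1), (if i = Fin.last k then 1 else a k - a (i:ℕ))) * C.det) := by
      have hBeq : B = Matrix.of fun i j : Fin (k+1) =>
          (a k - b (j:ℕ))⁻¹ *
            ((Matrix.of fun i j : Fin (k+1) =>
              (if i = Fin.last k then 1 else a k - a (i:ℕ)) * C i j) i j) := by
        ext i j
        by_cases hi : i = Fin.last k
        · simp [hB, hC, hi, Fin.val_last]
        · have hx : a (i:ℕ) - b (j:ℕ) ≠ 0 := hne _ i.isLt _ j.isLt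
          have hy : a k - b (j:ℕ) ≠ 0 := hne k hk1 _ j.isLt
          simp only [hB, hC, Matrix.of_apply]
          simp only [if_neg hi]
          rw [inv_sub_inv_mul hx hy]
          ring
      rw [hBeq, Matrix.det_mul_row, Matrix.det_mul_column]
    -- step 3 : det C = det D
    have h3 : C.det = D.det := by
      rw [← Matrix.det_transpose C, ← Matrix.det_transpose D]
      refine Matrix.det_eq_of_forall_row_eq_smul_add_const
        (fun j => if j = Fin.last k then 0 else 1) (Fin.last k) (if_pos rfl) ?_
      intro j i
      by_cases hj : j = Fin.last k
      · simp [hD, hj, Matrix.transpose_apply]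
      · simp only [Matrix.transpose_apply, hD, Matrix.of_apply]
        simp only [if_neg hj, if_true]
        ring
    -- step 4 : expand det D along the last row
    have hDlast : ∀ j : Fin (k+1), D (Fin.last k) j = if j = Fin.last k then 1 else 0 := by
      intro j
      by_cases hj : j = Fin.last k
      · simp [hD, hC, hj]
      · simp [hD, hC, if_neg hj]
    have h4 : D.det = (D.submatrix Fin.castSucc Fin.castSucc).det := by
      rw [Matrix.det_succ_row D (Fin.last k)]
      rw [Finset.sum_eq_single (Fin.last k)]
      · rw [hDlast, if_pos rfl, Fin.succAbove_last, Fin.val_last]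
        rw [Even.neg_one_pow ⟨k, rfl⟩]; ring
      · intro j _ hj
        rw [hDlast, if_neg hj]; ring
      · intro h; exact absurd (Finset.mem_univ _) h
    -- step 5 : the submatrix
    have h5 : (D.submatrix Fin.castSucc Fin.castSucc).det =
        (∏ j : Fin k, (b (j:ℕ) - b k)) * ((∏ i : Fin k, (a (i:ℕ) - b k)⁻¹) *
          (Matrix.of fun i j : Fin k => (a (i:ℕ) - b (j:ℕ))⁻¹).det) := by
      have hsub : D.submatrix Fin.castSucc Fin.castSucc =
          Matrix.of fun i j : Fin k => (b (j:ℕ) - b k) *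
            ((Matrix.of fun i j : Fin k =>
              (a (i:ℕ) - b k)⁻¹ * (Matrix.of fun i j : Fin k =>
                (a (i:ℕ) - b (j:ℕ))⁻¹) i j) i j) := by
        ext i j
        have hil : Fin.castSucc i ≠ Fin.last k := (Fin.castSucc_lt_last i).ne
        have hjl : Fin.castSucc j ≠ Fin.last k := (Fin.castSucc_lt_last j).ne
        have hx : a (i:ℕ) - b (j:ℕ) ≠ 0 :=
          hne _ (Nat.lt_succ_of_lt i.isLt) _ (Nat.lt_succ_of_lt j.isLt)
        have hy : a (i:ℕ) - b k ≠ 0 := hne _ (Nat.lt_succ_of_lt i.isLt) k hk1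
        simp only [Matrix.submatrix_apply, hD, hC, Matrix.of_apply]
        simp only [if_neg hjl, if_neg hil, Fin.coe_castSucc, Fin.val_last]
        rw [inv_sub_inv_mul hx hy]
        ring
      rw [hsub, Matrix.det_mul_row, Matrix.det_mul_column]
    -- IH
    have hIH := IH a b fun i hi j hj =>
      hne i (Nat.lt_succ_of_lt hi) j (Nat.lt_succ_of_lt hj)
    -- assemble
    rw [h1, h2, h3, h4, h5, hIH]
    -- convert Fin products to range products
    have e1 : (∏ j : Fin (k+1), (a k - b (j:ℕ))⁻¹)
        = (∏ j ∈ range k, (a k - b j))⁻¹ * (a k - b k)⁻¹ := by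
      rw [Fin.prod_univ_eq_prod_range (fun j => (a k - b j)⁻¹) (k+1), prod_range_succ,
        Finset.prod_inv_distrib]
    have e2 : (∏ i : Fin (k+1), (if i = Fin.last k then 1 else a k - a (i:ℕ)))
        = ∏ i ∈ range k, (a k - a i) := by
      rw [Fin.prod_univ_castSucc]
      have hterm : ∀ i : Fin k,
          (if Fin.castSucc i = Fin.last k then 1 else a k - a ((Fin.castSucc i : ℕ)))
            = a k - a (i : ℕ) := fun i => by
        rw [if_neg (Fin.castSucc_lt_last i).ne, Fin.coe_castSucc]
      rw [Finset.prod_congr rfl (fun i _ => hterm i)]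
      simp only [if_true, ite_self, eq_self_iff_true, if_pos, mul_one]
      rw [Fin.prod_univ_eq_prod_range (fun i => a k - a i) k]
    have e3 : (∏ j : Fin k, (b (j:ℕ) - b k)) = ∏ j ∈ range k, (b j - b k) :=
      Fin.prod_univ_eq_prod_range (fun j => b j - b k) k
    have e4 : (∏ i : Fin k, (a (i:ℕ) - b k)⁻¹) = (∏ i ∈ range k, (a i - b k))⁻¹ := by
      rw [Fin.prod_univ_eq_prod_range (fun i => (a i - b k)⁻¹) k, Finset.prod_inv_distrib]
    rw [e1, e2, e3, e4]
    -- expand RHS products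
    rw [prod_range_succ (fun j => ∏ i ∈ range j, ((a j - a i) * (b i - b j)))]
    rw [prod_range_succ (fun i => ∏ j ∈ range (k+1), (a i - b j))]
    have e5 : (∏ i ∈ range k, ∏ j ∈ range (k+1), (a i - b j))
        = (∏ i ∈ range k, ∏ j ∈ range k, (a i - b j)) * ∏ i ∈ range k, (a i - b k) := by
      rw [← Finset.prod_mul_distrib]
      exact Finset.prod_congr rfl fun i _ => prod_range_succ _ _
    have e6 : (∏ j ∈ range (k+1), (a k - b j))
        = (∏ j ∈ range k, (a k - b j)) * (a k - b k) := prod_range_succ _ _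
    have e7 : (∏ i ∈ range k, ((a k - a i) * (b i - b k)))
        = (∏ i ∈ range k, (a k - a i)) * ∏ i ∈ range k, (b i - b k) :=
      Finset.prod_mul_distrib
    rw [e5, e6, e7]
    field_simp


/-- The block Cauchy identity with exponential-integral representation:
for complex sequences `w, v` (length `n`) and `𝗐, 𝗏` (length `m`) with real
parts `< γ/2` and `Re(w_i − v_j) > 0`, `Re(𝗐_i − 𝗏_j) > 0`, the product of the
two Cauchy determinants times the cross term equals the integral over
`(0,∞)^{n+m}` of the determinant of the exponential block matrix. -/
theorem block_cauchy_integral (n m : ℕ) (γ : ℝ) (hγ : 0 < γ)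
    (w v : Fin n → ℂ) (ww vv : Fin m → ℂ)
    (hw : ∀ i, (w i).re < γ / 2) (hv : ∀ i, (v i).re < γ / 2)
    (hww : ∀ i, (ww i).re < γ / 2) (hvv : ∀ i, (vv i).re < γ / 2)
    (hwv : ∀ i j, 0 < (w i - v j).re) (hwwvv : ∀ i j, 0 < (ww i - vv j).re) :
    (Matrix.of fun k l : Fin n => (w k - v l)⁻¹).det *
        (Matrix.of fun k l : Fin m => (ww k - vv l)⁻¹).det *
        ∏ k : Fin n, ∏ l : Fin m,
          (((γ : ℂ) - ww l - v k) * ((γ : ℂ) - vv l - w k)) /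
            ((((γ : ℂ) - ww l - w k)) * (((γ : ℂ) - vv l - v k)))
      = ∫ x in Set.univ.pi fun _ : Fin n ⊕ Fin m => Set.Ioi (0 : ℝ),
          (Matrix.fromBlocks
            (Matrix.of fun i j : Fin n =>
              Complex.exp (-(x (Sum.inl j) : ℂ) * (w i - v j)))
            (Matrix.of fun (i : Fin n) (j : Fin m) =>
              -Complex.exp (-(x (Sum.inr j) : ℂ) * ((γ : ℂ) - w i - ww j)))
            (Matrix.of fun (i : Fin m) (j : Fin n) =>
              Complex.exp (-(x (Sum.inl j) : ℂ) * ((γ : ℂ) - vv i - v j)))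
            (Matrix.of fun i j : Fin m =>
              Complex.exp (-(x (Sum.inr j) : ℂ) * (ww j - vv i)))).det := by
  classical
  have hne0 : ∀ z : ℂ, 0 < z.re → z ≠ 0 := fun z hz h => by simp [h] at hz
  have hne0' : ∀ z : ℂ, z.re < 0 → z ≠ 0 := fun z hz h => by simp [h] at hz
  -- extended sequences
  set wE : ℕ → ℂ := fun i => if h : i < n then w ⟨i, h⟩ else 0 with hwE
  set vE : ℕ → ℂ := fun i => if h : i < n then v ⟨i, h⟩ else 0 with hvE
  set wwE : ℕ → ℂ := fun i => if h : i < m then ww ⟨i, h⟩ else 0 with hwwE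
  set vvE : ℕ → ℂ := fun i => if h : i < m then vv ⟨i, h⟩ else 0 with hvvE
  set aa : ℕ → ℂ := fun i => if i < n then wE i else (γ:ℂ) - vvE (i - n) with haa
  set bb : ℕ → ℂ := fun j => if j < n then vE j else (γ:ℂ) - wwE (j - n) with hbb
  have hwEq : ∀ i : Fin n, wE (i : ℕ) = w i := fun i => by simp [hwE]
  have hvEq : ∀ i : Fin n, vE (i : ℕ) = v i := fun i => by simp [hvE]
  have hwwEq : ∀ i : Fin m, wwE (i : ℕ) = ww i := fun i => by simp [hwwE]
  have hvvEq : ∀ i : Fin m, vvE (i : ℕ) = vv i := fun i => by simp [hvvE]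
  have haL : ∀ i, i < n → aa i = wE i := fun i hi => by simp [haa, hi]
  have hbL : ∀ j, j < n → bb j = vE j := fun j hj => by simp [hbb, hj]
  have haR : ∀ i, aa (n + i) = (γ:ℂ) - vvE i := fun i => by
    have h : ¬ (n + i < n) := by omega
    simp [haa, h]
  have hbR : ∀ j, bb (n + j) = (γ:ℂ) - wwE j := fun j => by
    have h : ¬ (n + j < n) := by omega
    simp [hbb, h]
  -- real part facts for extended sequences (on valid indices)
  have hwre : ∀ i (h : i < n), (wE i).re < γ / 2 := fun i h => by
    rw [hwE]; simp only; rw [dif_pos h]; exact hw _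
  have hvre : ∀ i (h : i < n), (vE i).re < γ / 2 := fun i h => by
    rw [hvE]; simp only; rw [dif_pos h]; exact hv _
  have hwwre : ∀ i (h : i < m), (wwE i).re < γ / 2 := fun i h => by
    rw [hwwE]; simp only; rw [dif_pos h]; exact hww _
  have hvvre : ∀ i (h : i < m), (vvE i).re < γ / 2 := fun i h => by
    rw [hvvE]; simp only; rw [dif_pos h]; exact hvv _
  have hwvre : ∀ i (hi : i < n) j (hj : j < n), 0 < (wE i - vE j).re := fun i hi j hj => by
    rw [hwE, hvE]; simp only; rw [dif_pos hi, dif_pos hj]; exact hwv _ _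
  have hwwvvre : ∀ i (hi : i < m) j (hj : j < m), 0 < (wwE i - vvE j).re := fun i hi j hj => by
    rw [hwwE, hvvE]; simp only; rw [dif_pos hi, dif_pos hj]; exact hwwvv _ _
  -- nonvanishing for the Cauchy lemmas
  have habn : ∀ i < n, ∀ j < n, wE i - vE j ≠ 0 := fun i hi j hj =>
    hne0 _ (hwvre i hi j hj)
  have habm : ∀ i < m, ∀ j < m, wwE i - vvE j ≠ 0 := fun i hi j hj =>
    hne0 _ (hwwvvre i hi j hj)
  have habN : ∀ i < n + m, ∀ j < n + m, aa i - bb j ≠ 0 := by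
    intro i hi j hj
    by_cases hin : i < n <;> by_cases hjn : j < n
    · rw [haL i hin, hbL j hjn]; exact habn i hin j hjn
    · have hj' : j - n < m := by omega
      have hj2 : j = n + (j - n) := by omega
      rw [haL i hin, hj2, hbR]
      refine hne0' _ ?_
      have h1 := hwre i hin
      have h2 := hwwre (j - n) hj'
      simp only [Complex.sub_re, Complex.ofReal_re]
      linarith
    · have hi' : i - n < m := by omega
      have hi2 : i = n + (i - n) := by omega
      rw [hi2, haR, hbL j hjn]
      refine hne0 _ ?_
      have h1 := hvvre (i - n) hi'
      have h2 := hvre j hjn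
      simp only [Complex.sub_re, Complex.ofReal_re]
      linarith
    · have hi' : i - n < m := by omega
      have hj' : j - n < m := by omega
      have hi2 : i = n + (i - n) := by omega
      have hj2 : j = n + (j - n) := by omega
      rw [hi2, hj2, haR, hbR]
      refine hne0 _ ?_
      have h1 := hwwvvre (j - n) hj' (i - n) hi'
      simp only [Complex.sub_re, Complex.ofReal_re] at h1 ⊢
      linarith
  -- the two small determinants
  have hdet1 : (Matrix.of fun k l : Fin n => (w k - v l)⁻¹).det
      = (∏ j ∈ range n, ∏ i ∈ range j, ((wE j - wE i) * (vE i - vE j))) /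
        ∏ i ∈ range n, ∏ j ∈ range n, (wE i - vE j) := by
    rw [show (Matrix.of fun k l : Fin n => (w k - v l)⁻¹)
        = Matrix.of fun k l : Fin n => (wE (k:ℕ) - vE (l:ℕ))⁻¹ from by
      ext k l; simp only [Matrix.of_apply]; rw [hwEq k, hvEq l]]
    exact cauchy_det n wE vE habn
  have hdet2 : (Matrix.of fun k l : Fin m => (ww k - vv l)⁻¹).det
      = (∏ j ∈ range m, ∏ i ∈ range j, ((wwE j - wwE i) * (vvE i - vvE j))) /
        ∏ i ∈ range m, ∏ j ∈ range m, (wwE i - vvE j) := by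
    rw [show (Matrix.of fun k l : Fin m => (ww k - vv l)⁻¹)
        = Matrix.of fun k l : Fin m => (wwE (k:ℕ) - vvE (l:ℕ))⁻¹ from by
      ext k l; simp only [Matrix.of_apply]; rw [hwwEq k, hvvEq l]]
    exact cauchy_det m wwE vvE habm
  -- the cross product in extended form
  have hCross : (∏ k : Fin n, ∏ l : Fin m,
        (((γ : ℂ) - ww l - v k) * ((γ : ℂ) - vv l - w k)) /
          ((((γ : ℂ) - ww l - w k)) * (((γ : ℂ) - vv l - v k))))
      = ∏ k ∈ range n, ∏ l ∈ range m,
        (((γ : ℂ) - wwE l - vE k) * ((γ : ℂ) - vvE l - wE k)) /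
          ((((γ : ℂ) - wwE l - wE k)) * (((γ : ℂ) - vvE l - vE k))) := by
    rw [show (∏ k : Fin n, ∏ l : Fin m,
        (((γ : ℂ) - ww l - v k) * ((γ : ℂ) - vv l - w k)) /
          ((((γ : ℂ) - ww l - w k)) * (((γ : ℂ) - vv l - v k))))
        = ∏ k : Fin n, ∏ l : Fin m,
        (((γ : ℂ) - wwE (l:ℕ) - vE (k:ℕ)) * ((γ : ℂ) - vvE (l:ℕ) - wE (k:ℕ))) /
          ((((γ : ℂ) - wwE (l:ℕ) - wE (k:ℕ))) * (((γ : ℂ) - vvE (l:ℕ) - vE (k:ℕ))))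
      from Finset.prod_congr rfl fun k _ => Finset.prod_congr rfl fun l _ => by
        rw [hwEq k, hvEq k, hwwEq l, hvvEq l]]
    rw [Fin.prod_univ_eq_prod_range (fun k => ∏ l : Fin m,
        (((γ : ℂ) - wwE (l:ℕ) - vE k) * ((γ : ℂ) - vvE (l:ℕ) - wE k)) /
          ((((γ : ℂ) - wwE (l:ℕ) - wE k)) * (((γ : ℂ) - vvE (l:ℕ) - vE k)))) n]
    exact Finset.prod_congr rfl fun k _ => Fin.prod_univ_eq_prod_range (fun l =>
        (((γ : ℂ) - wwE l - vE k) * ((γ : ℂ) - vvE l - wE k)) /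
          ((((γ : ℂ) - wwE l - wE k)) * (((γ : ℂ) - vvE l - vE k)))) m
  -- the integral
  set g : (Fin n ⊕ Fin m) → (Fin n ⊕ Fin m) → ℝ → ℂ := fun p q t =>
    Sum.elim
      (fun i => Sum.elim (fun j => Complex.exp (-(t:ℂ) * (w i - v j)))
          (fun j => -Complex.exp (-(t:ℂ) * ((γ:ℂ) - w i - ww j))) q)
      (fun i => Sum.elim (fun j => Complex.exp (-(t:ℂ) * ((γ:ℂ) - vv i - v j)))
          (fun j => Complex.exp (-(t:ℂ) * (ww j - vv i))) q) p with hg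
  have hre1 : ∀ (i : Fin n) (j : Fin m), 0 < ((γ:ℂ) - w i - ww j).re := fun i j => by
    have h1 := hw i; have h2 := hww j
    simp only [Complex.sub_re, Complex.ofReal_re]; linarith
  have hre2 : ∀ (i : Fin m) (j : Fin n), 0 < ((γ:ℂ) - vv i - v j).re := fun i j => by
    have h1 := hvv i; have h2 := hv j
    simp only [Complex.sub_re, Complex.ofReal_re]; linarith
  have hgint : ∀ p q, IntegrableOn (g p q) (Set.Ioi (0:ℝ)) := by
    rintro (i|i) (j|j)
    · exact integrableOn_cexp_neg_mul (hwv i j)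
    · exact (integrableOn_cexp_neg_mul (hre1 i j)).neg
    · exact integrableOn_cexp_neg_mul (hre2 i j)
    · exact integrableOn_cexp_neg_mul (hwwvv j i)
  have hmat : ∀ x : (Fin n ⊕ Fin m) → ℝ,
      (Matrix.fromBlocks
            (Matrix.of fun i j : Fin n =>
              Complex.exp (-(x (Sum.inl j) : ℂ) * (w i - v j)))
            (Matrix.of fun (i : Fin n) (j : Fin m) =>
              -Complex.exp (-(x (Sum.inr j) : ℂ) * ((γ : ℂ) - w i - ww j)))
            (Matrix.of fun (i : Fin m) (j : Fin n) =>
              Complex.exp (-(x (Sum.inl j) : ℂ) * ((γ : ℂ) - vv i - v j)))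
            (Matrix.of fun i j : Fin m =>
              Complex.exp (-(x (Sum.inr j) : ℂ) * (ww j - vv i))))
        = Matrix.of fun p q => g p q (x q) := by
    intro x; ext p q
    rcases p with i|i <;> rcases q with j|j <;>
      simp [hg]
  have hNmat : (Matrix.of fun p q : Fin n ⊕ Fin m => ∫ t in Set.Ioi (0:ℝ), g p q t)
      = (Matrix.of fun i j : Fin (n+m) => (aa i - bb j)⁻¹).submatrix
          finSumFinEquiv finSumFinEquiv := by
    ext p q
    rcases p with i|i <;> rcases q with j|j <;>
      simp only [hg, Matrix.of_apply, Matrix.submatrix_apply, finSumFinEquiv_apply_left,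
        finSumFinEquiv_apply_right, Sum.elim_inl, Sum.elim_inr, Fin.coe_castAdd,
        Fin.coe_natAdd]
    · rw [integral_cexp_neg_mul (hwv i j), haL _ i.isLt, hbL _ j.isLt, hwEq, hvEq]
    · rw [integral_neg, integral_cexp_neg_mul (hre1 i j), haL _ i.isLt, hbR, hwEq, hwwEq]
      rw [show w i - ((γ:ℂ) - ww j) = -(((γ:ℂ) - w i - ww j)) from by ring, inv_neg]
    · rw [integral_cexp_neg_mul (hre2 i j), haR, hbL _ j.isLt, hvvEq, hvEq]
    · rw [integral_cexp_neg_mul (hwwvv j i), haR, hbR, hvvEq, hwwEq]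
      rw [show ((γ:ℂ) - vv i) - ((γ:ℂ) - ww j) = ww j - vv i from by ring]
  have hInt : (∫ x in Set.univ.pi fun _ : Fin n ⊕ Fin m => Set.Ioi (0 : ℝ),
        (Matrix.fromBlocks
            (Matrix.of fun i j : Fin n =>
              Complex.exp (-(x (Sum.inl j) : ℂ) * (w i - v j)))
            (Matrix.of fun (i : Fin n) (j : Fin m) =>
              -Complex.exp (-(x (Sum.inr j) : ℂ) * ((γ : ℂ) - w i - ww j)))
            (Matrix.of fun (i : Fin m) (j : Fin n) =>
              Complex.exp (-(x (Sum.inl j) : ℂ) * ((γ : ℂ) - vv i - v j)))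
            (Matrix.of fun i j : Fin m =>
              Complex.exp (-(x (Sum.inr j) : ℂ) * (ww j - vv i)))).det)
      = (∏ j ∈ range (n+m), ∏ i ∈ range j, ((aa j - aa i) * (bb i - bb j))) /
        ∏ i ∈ range (n+m), ∏ j ∈ range (n+m), (aa i - bb j) := by
    simp only [hmat]
    rw [integral_det_exp g hgint, hNmat, Matrix.det_submatrix_equiv_self,
      cauchy_det (n+m) aa bb habN]
  rw [hdet1, hdet2, hCross, hInt]
  -- decompose numerator
  have hNum : (∏ j ∈ range (n+m), ∏ i ∈ range j, ((aa j - aa i) * (bb i - bb j)))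
      = (∏ j ∈ range n, ∏ i ∈ range j, ((wE j - wE i) * (vE i - vE j)))
        * ((∏ j ∈ range m, ∏ i ∈ range n,
            ((((γ:ℂ) - vvE j - wE i)) * (vE i - ((γ:ℂ) - wwE j))))
          * (∏ j ∈ range m, ∏ i ∈ range j, ((wwE j - wwE i) * (vvE i - vvE j)))) := by
    rw [Finset.prod_range_add (fun j => ∏ i ∈ range j, ((aa j - aa i) * (bb i - bb j))) n m]
    congr 1
    · refine Finset.prod_congr rfl fun j hj => Finset.prod_congr rfl fun i hi => ?_
      have hj' := mem_range.mp hj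
      have hi' : i < n := lt_trans (mem_range.mp hi) hj'
      rw [haL j hj', haL i hi', hbL i hi', hbL j hj']
    · rw [← Finset.prod_mul_distrib]
      refine Finset.prod_congr rfl fun j hj => ?_
      rw [Finset.prod_range_add (fun i => ((aa (n+j) - aa i) * (bb i - bb (n+j)))) n j]
      congr 1
      · refine Finset.prod_congr rfl fun i hi => ?_
        have hi' := mem_range.mp hi
        rw [haR j, hbR j, haL i hi', hbL i hi']
      · refine Finset.prod_congr rfl fun i hi => ?_
        rw [haR j, haR i, hbR i, hbR j]
        ring
  -- decompose denominator
  have hDen : (∏ i ∈ range (n+m), ∏ j ∈ range (n+m), (aa i - bb j))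
      = ((∏ i ∈ range n, ∏ j ∈ range n, (wE i - vE j))
          * (∏ i ∈ range n, ∏ j ∈ range m, (wE i - ((γ:ℂ) - wwE j))))
        * ((∏ i ∈ range m, ∏ j ∈ range n, ((γ:ℂ) - vvE i - vE j))
          * (∏ i ∈ range m, ∏ j ∈ range m, (wwE i - vvE j))) := by
    rw [Finset.prod_range_add (fun i => ∏ j ∈ range (n+m), (aa i - bb j)) n m]
    congr 1
    · rw [← Finset.prod_mul_distrib]
      refine Finset.prod_congr rfl fun i hi => ?_
      have hi' := mem_range.mp hi
      rw [Finset.prod_range_add (fun j => (aa i - bb j)) n m]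
      congr 1
      · exact Finset.prod_congr rfl fun j hj => by
          rw [haL i hi', hbL j (mem_range.mp hj)]
      · exact Finset.prod_congr rfl fun j _ => by rw [haL i hi', hbR j]
    · have hrow : ∀ i ∈ range m, (∏ j ∈ range (n+m), (aa (n+i) - bb j))
          = (∏ j ∈ range n, ((γ:ℂ) - vvE i - vE j)) * (∏ j ∈ range m, (wwE j - vvE i)) := by
        intro i _
        rw [Finset.prod_range_add (fun j => (aa (n+i) - bb j)) n m]
        congr 1
        · exact Finset.prod_congr rfl fun j hj => by
            rw [haR i, hbL j (mem_range.mp hj)]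
        · exact Finset.prod_congr rfl fun j _ => by
            rw [haR i, hbR j]; ring
      rw [Finset.prod_congr rfl hrow, Finset.prod_mul_distrib]
      congr 1
      exact Finset.prod_comm
  -- rewrite the cross product as a ratio of products
  have hCross2 : (∏ k ∈ range n, ∏ l ∈ range m,
        (((γ : ℂ) - wwE l - vE k) * ((γ : ℂ) - vvE l - wE k)) /
          ((((γ : ℂ) - wwE l - wE k)) * (((γ : ℂ) - vvE l - vE k))))
      = ((∏ l ∈ range m, ∏ k ∈ range n, ((γ:ℂ) - vvE l - wE k))
          * (∏ l ∈ range m, ∏ k ∈ range n, (vE k - ((γ:ℂ) - wwE l))))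
        / ((∏ k ∈ range n, ∏ l ∈ range m, (wE k - ((γ:ℂ) - wwE l)))
          * (∏ k ∈ range n, ∏ l ∈ range m, ((γ:ℂ) - vvE l - vE k))) := by
    have step : ∀ k ∈ range n, (∏ l ∈ range m,
          (((γ : ℂ) - wwE l - vE k) * ((γ : ℂ) - vvE l - wE k)) /
            ((((γ : ℂ) - wwE l - wE k)) * (((γ : ℂ) - vvE l - vE k))))
        = ∏ l ∈ range m,
            ((((γ:ℂ) - vvE l - wE k) * (vE k - ((γ:ℂ) - wwE l)))
              / ((wE k - ((γ:ℂ) - wwE l)) * (((γ:ℂ) - vvE l - vE k)))) := by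
      refine fun k _ => Finset.prod_congr rfl fun l _ => ?_
      rw [show ((γ:ℂ) - vvE l - wE k) * (vE k - ((γ:ℂ) - wwE l))
          = -((((γ : ℂ) - wwE l - vE k)) * (((γ : ℂ) - vvE l - wE k))) from by ring,
        show (wE k - ((γ:ℂ) - wwE l)) * (((γ:ℂ) - vvE l - vE k))
          = -((((γ : ℂ) - wwE l - wE k)) * (((γ : ℂ) - vvE l - vE k))) from by ring,
        neg_div_neg_eq]
    rw [Finset.prod_congr rfl step]
    simp only [Finset.prod_div_distrib, Finset.prod_mul_distrib]
    rw [show (∏ k ∈ range n, ∏ l ∈ range m, ((γ:ℂ) - vvE l - wE k))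
        = ∏ l ∈ range m, ∏ k ∈ range n, ((γ:ℂ) - vvE l - wE k) from Finset.prod_comm,
      show (∏ k ∈ range n, ∏ l ∈ range m, (vE k - ((γ:ℂ) - wwE l)))
        = ∏ l ∈ range m, ∏ k ∈ range n, (vE k - ((γ:ℂ) - wwE l)) from Finset.prod_comm]
  rw [hNum, hDen, hCross2,
    show (∏ j ∈ range m, ∏ i ∈ range n,
        ((((γ:ℂ) - vvE j - wE i)) * (vE i - ((γ:ℂ) - wwE j))))
      = (∏ j ∈ range m, ∏ i ∈ range n, ((γ:ℂ) - vvE j - wE i))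
        * (∏ j ∈ range m, ∏ i ∈ range n, (vE i - ((γ:ℂ) - wwE j))) from by
      simp only [Finset.prod_mul_distrib],
    show (∏ i ∈ range m, ∏ j ∈ range n, ((γ:ℂ) - vvE i - vE j))
      = ∏ j ∈ range n, ∏ i ∈ range m, ((γ:ℂ) - vvE i - vE j) from Finset.prod_comm]
  rw [div_mul_div_comm, div_mul_div_comm]
  congr 1 <;> ring
end
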